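/- arXiv:0908.3629 — 5 statements merged into one kernel-verified Lean document; each statement's English description precedes it below -/
import Mathlib

section
/- Let E ~ Exp(1/2) and G ~ Gamma(1/2, 1/2) be independent random variables. Then √(E·G) has the exponential distribution with rate 1, i.e. √(E·G) ~ Exp(1). -/
open MeasureTheory ProbabilityTheory

section Aux
open Real Set

lemma sqrt4 : Real.sqrt 4 = 2 := by
  rw [show (4:ℝ) = 2^2 by norm_num, Real.sqrt_sq (by norm_num : (0:ℝ) ≤ 2)]

lemma gauss_int : ∫ u : ℝ, Real.exp (-(u^2/2)) = Real.sqrt (2*π) := by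
  have h := integral_gaussian (1/2)
  simp_rw [show ∀ u : ℝ, -(1/2:ℝ)*u^2 = -(u^2/2) by intro u; ring] at h
  rw [h]; norm_num; rw [mul_comm]

lemma gauss_int_Ioi : ∫ u in Ioi (0:ℝ), Real.exp (-(u^2/2)) = Real.sqrt (π/2) := by
  have h := integral_gaussian_Ioi (1/2)
  simp_rw [show ∀ u : ℝ, -(1/2:ℝ)*u^2 = -(u^2/2) by intro u; ring] at h
  rw [h]
  rw [show π/(1/2) = 4*(π/2) by ring, Real.sqrt_mul (by norm_num) (π/2), sqrt4]
  ring

lemma glasser {t : ℝ} (ht : 0 ≤ t) :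
    ∫ x in Ioi (0:ℝ), Real.exp (-((x - t/x)^2/2)) = Real.sqrt (π/2) := by
  rcases ht.eq_or_lt with h0 | h0
  · rw [← gauss_int_Ioi, ← h0]
    refine setIntegral_congr_fun measurableSet_Ioi (fun x hx => ?_)
    simp
  · -- 0 < t
    set φ : ℝ → ℝ := fun x => x - t/x with hφ
    set D : ℝ → ℝ := fun x => 1 + t/x^2 with hD
    have hderiv : ∀ x ∈ Ioi (0:ℝ), HasDerivWithinAt φ (D x) (Ioi 0) x := by
      intro x hx
      have hx0 : x ≠ 0 := ne_of_gt hx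
      have h1 : HasDerivAt (fun y : ℝ => y - t * y⁻¹) (1 - t * (-(x^2)⁻¹)) x :=
        (hasDerivAt_id x).sub (((hasDerivAt_inv hx0)).const_mul t)
      have heq : φ = fun y : ℝ => y - t * y⁻¹ := by
        funext y; simp [hφ, div_eq_mul_inv]
      have h2 : HasDerivAt φ (D x) x := by
        rw [heq]
        convert h1 using 1
        simp only [hD]
        field_simp
        ring
      exact h2.hasDerivWithinAt
    have hinj : InjOn φ (Ioi 0) := by
      intro x hx y hy h
      simp only [hφ] at h
      have hx0 : (x:ℝ) ≠ 0 := ne_of_gt hx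
      have hy0 : (y:ℝ) ≠ 0 := ne_of_gt hy
      field_simp at h
      nlinarith [mul_pos (mem_Ioi.mp hx) (mem_Ioi.mp hy)]
    have himg : φ '' Ioi 0 = univ := by
      apply eq_univ_of_forall
      intro u
      have hs : Real.sqrt (u^2 + 4*t) ^ 2 = u^2 + 4*t := Real.sq_sqrt (by positivity)
      have habs : |u| < Real.sqrt (u^2 + 4*t) := by
        rw [← Real.sqrt_sq_eq_abs]
        exact Real.sqrt_lt_sqrt (sq_nonneg u) (by linarith)
      have hxpos : 0 < (u + Real.sqrt (u^2 + 4*t))/2 := by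
        have := neg_abs_le u
        linarith
      refine ⟨(u + Real.sqrt (u^2 + 4*t))/2, hxpos, ?_⟩
      have hx0 : (u + Real.sqrt (u^2 + 4*t))/2 ≠ 0 := ne_of_gt hxpos
      have hdiv : t / ((u + Real.sqrt (u^2 + 4*t))/2) = (u + Real.sqrt (u^2 + 4*t))/2 - u := by
        rw [div_eq_iff hx0]
        nlinarith [hs]
      simp only [hφ, hdiv]
      ring
    -- continuity and integrability facts
    have hφcont : ContinuousOn φ (Ioi 0) :=
      continuousOn_id.sub (continuousOn_const.div continuousOn_id (fun x hx => ne_of_gt hx))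
    have hfcont : ContinuousOn (fun x => Real.exp (-((φ x)^2/2))) (Ioi 0) :=
      (((hφcont.pow 2).div_const 2).neg).rexp
    have hint_all : IntegrableOn (fun x => |D x| • Real.exp (-((φ x)^2/2))) (Ioi 0) := by
      rw [← integrableOn_image_iff_integrableOn_abs_deriv_smul measurableSet_Ioi hderiv hinj
        (fun u => Real.exp (-(u^2/2))), himg]
      have h := integrable_exp_neg_mul_sq (by norm_num : (0:ℝ) < 1/2)
      simp_rw [show ∀ u:ℝ, -(1/2:ℝ)*u^2 = -(u^2/2) by intro u; ring] at h
      exact h.integrableOn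
    have hDpos : ∀ x ∈ Ioi (0:ℝ), 0 < D x := by
      intro x hx
      have hx' : (0:ℝ) < x := hx
      have : 0 < t/x^2 := div_pos h0 (by positivity)
      simp only [hD]; linarith
    have habs : ∀ x ∈ Ioi (0:ℝ), |D x| • Real.exp (-((φ x)^2/2))
        = Real.exp (-((φ x)^2/2)) + (t/x^2) * Real.exp (-((φ x)^2/2)) := by
      intro x hx
      rw [abs_of_pos (hDpos x hx), smul_eq_mul, hD]; ring
    have hint1 : IntegrableOn (fun x => Real.exp (-((φ x)^2/2))) (Ioi 0) := by
      refine hint_all.mono' (hfcont.aestronglyMeasurable measurableSet_Ioi) ?_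
      refine (ae_restrict_iff' measurableSet_Ioi).mpr (ae_of_all _ (fun x hx => ?_))
      rw [habs x hx, Real.norm_eq_abs, abs_of_pos (Real.exp_pos _)]
      have hx' : (0:ℝ) < x := hx
      nlinarith [Real.exp_pos (-((φ x)^2/2)), div_pos h0 (pow_pos hx' 2)]
    have hint2 : IntegrableOn (fun x => (t/x^2) * Real.exp (-((φ x)^2/2))) (Ioi 0) := by
      refine hint_all.mono' (((continuousOn_const.div (continuousOn_pow 2)
        (fun x hx => pow_ne_zero 2 (ne_of_gt hx))).mul hfcont).aestronglyMeasurable measurableSet_Ioi) ?_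
      refine (ae_restrict_iff' measurableSet_Ioi).mpr (ae_of_all _ (fun x hx => ?_))
      rw [habs x hx, Real.norm_eq_abs]
      have hx' : (0:ℝ) < x := hx
      rw [abs_of_pos (mul_pos (div_pos h0 (pow_pos hx' 2)) (Real.exp_pos _))]
      nlinarith [Real.exp_pos (-((φ x)^2/2))]
    have hstep1 : Real.sqrt (2*π) = (∫ x in Ioi (0:ℝ), Real.exp (-((φ x)^2/2)))
        + ∫ x in Ioi (0:ℝ), (t/x^2) * Real.exp (-((φ x)^2/2)) := by
      rw [← gauss_int]
      calc ∫ u : ℝ, Real.exp (-(u^2/2))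
          = ∫ u in φ '' Ioi 0, Real.exp (-(u^2/2)) := by rw [himg, Measure.restrict_univ]
        _ = ∫ x in Ioi 0, |D x| • Real.exp (-((φ x)^2/2)) :=
            integral_image_eq_integral_abs_deriv_smul measurableSet_Ioi hderiv hinj _
        _ = ∫ x in Ioi 0, (Real.exp (-((φ x)^2/2)) + (t/x^2) * Real.exp (-((φ x)^2/2))) :=
            setIntegral_congr_fun measurableSet_Ioi habs
        _ = _ := integral_add hint1 hint2
    have hψderiv : ∀ w ∈ Ioi (0:ℝ), HasDerivWithinAt (fun w => t/w) (-(t/w^2)) (Ioi 0) w := by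
      intro w hw
      have hw0 : w ≠ 0 := ne_of_gt hw
      have h1 : HasDerivAt (fun w : ℝ => t * w⁻¹) (t * (-(w^2)⁻¹)) w :=
        (hasDerivAt_inv hw0).const_mul t
      have h2 : HasDerivAt (fun w : ℝ => t/w) (-(t/w^2)) w := by
        simp_rw [div_eq_mul_inv]
        convert h1 using 1
        field_simp
      exact h2.hasDerivWithinAt
    have hψinj : InjOn (fun w : ℝ => t/w) (Ioi 0) := by
      intro x hx y hy h
      simp only at h
      rw [div_eq_div_iff (ne_of_gt hx) (ne_of_gt hy)] at h
      exact (mul_left_cancel₀ (ne_of_gt h0) h).symm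
    have hψimg : (fun w : ℝ => t/w) '' Ioi 0 = Ioi 0 := by
      ext x
      constructor
      · rintro ⟨w, hw, rfl⟩
        exact div_pos h0 hw
      · intro hx
        exact ⟨t/x, div_pos h0 hx, by field_simp⟩
    have hstep2 : ∫ x in Ioi (0:ℝ), Real.exp (-((φ x)^2/2))
        = ∫ x in Ioi (0:ℝ), (t/x^2) * Real.exp (-((φ x)^2/2)) := by
      calc ∫ x in Ioi (0:ℝ), Real.exp (-((φ x)^2/2))
          = ∫ x in (fun w : ℝ => t/w) '' Ioi 0, Real.exp (-((φ x)^2/2)) := by rw [hψimg]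
        _ = ∫ w in Ioi (0:ℝ), |(-(t/w^2))| • Real.exp (-((φ (t/w))^2/2)) :=
            integral_image_eq_integral_abs_deriv_smul measurableSet_Ioi hψderiv hψinj _
        _ = ∫ w in Ioi (0:ℝ), (t/w^2) * Real.exp (-((φ w)^2/2)) := by
            refine setIntegral_congr_fun measurableSet_Ioi (fun w hw => ?_)
            have hw' : (0:ℝ) < w := hw
            have hw0 : w ≠ 0 := ne_of_gt hw'
            have h1 : φ (t/w) = -(φ w) := by
              simp only [hφ]
              rw [div_div_eq_mul_div, mul_comm, mul_div_assoc, div_self (ne_of_gt h0), mul_one]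
              ring
            rw [h1, abs_neg, abs_of_pos (div_pos h0 (pow_pos hw' 2)), smul_eq_mul, neg_sq]
    have hfin : Real.sqrt (2*π) = 2 * Real.sqrt (π/2) := by
      rw [show (2:ℝ)*π = 4*(π/2) by ring, Real.sqrt_mul (by norm_num) (π/2), sqrt4]
    linarith [hstep1, hstep2, hfin]

lemma key2 {t : ℝ} (ht : 0 ≤ t) :
    ∫ x in Ioi (0:ℝ), Real.exp (-((x^2 + t^2/x^2)/2)) = Real.sqrt (π/2) * Real.exp (-t) := by
  have h : ∀ x ∈ Ioi (0:ℝ), Real.exp (-((x^2 + t^2/x^2)/2))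
      = Real.exp (-((x - t/x)^2/2)) * Real.exp (-t) := by
    intro x hx
    have hx0 : x ≠ 0 := ne_of_gt hx
    rw [← Real.exp_add]
    congr 1
    field_simp
    ring
  rw [setIntegral_congr_fun measurableSet_Ioi h, MeasureTheory.integral_mul_const, glasser ht]

lemma key {t : ℝ} (ht : 0 ≤ t) :
    ∫ y in Ioi (0:ℝ), y ^ (-(1/2) : ℝ) * Real.exp (-(1/2 * y) - t^2/(2*y))
      = Real.sqrt (2*π) * Real.exp (-t) := by
  have hderiv : ∀ x ∈ Ioi (0:ℝ), HasDerivWithinAt (fun x : ℝ => x^2) (2*x) (Ioi 0) x := by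
    intro x hx
    simpa [mul_comm] using (hasDerivAt_pow 2 x).hasDerivWithinAt
  have hinj : InjOn (fun x : ℝ => x^2) (Ioi 0) := by
    intro x hx y hy h
    simp only at h
    nlinarith [mem_Ioi.mp hx, mem_Ioi.mp hy]
  have himg : (fun x : ℝ => x^2) '' Ioi 0 = Ioi 0 := by
    ext y
    constructor
    · rintro ⟨x, hx, rfl⟩
      exact pow_pos (show (0:ℝ) < x from hx) 2
    · intro hy
      exact ⟨Real.sqrt y, Real.sqrt_pos.mpr hy, Real.sq_sqrt (le_of_lt hy)⟩
  calc ∫ y in Ioi (0:ℝ), y ^ (-(1/2) : ℝ) * Real.exp (-(1/2 * y) - t^2/(2*y))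
      = ∫ y in (fun x : ℝ => x^2) '' Ioi 0, y ^ (-(1/2) : ℝ) * Real.exp (-(1/2 * y) - t^2/(2*y)) := by
        rw [himg]
    _ = ∫ x in Ioi (0:ℝ), |2*x| • ((x^2) ^ (-(1/2) : ℝ) * Real.exp (-(1/2 * x^2) - t^2/(2*x^2))) :=
        integral_image_eq_integral_abs_deriv_smul measurableSet_Ioi hderiv hinj _
    _ = ∫ x in Ioi (0:ℝ), 2 * Real.exp (-((x^2 + t^2/x^2)/2)) := by
        refine setIntegral_congr_fun measurableSet_Ioi (fun x hx => ?_)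
        have hx' : (0:ℝ) < x := hx
        have hx0 : x ≠ 0 := ne_of_gt hx'
        have h1 : (x^2 : ℝ) ^ (-(1/2) : ℝ) = x⁻¹ := by
          rw [show (x^2 : ℝ) = x ^ ((2:ℕ):ℝ) by rw [Real.rpow_natCast],
            ← Real.rpow_mul hx'.le]
          norm_num [Real.rpow_neg_one]
        have h2 : -(1/2 * x^2) - t^2/(2*x^2) = -((x^2 + t^2/x^2)/2) := by
          field_simp
          ring
        rw [h1, h2, abs_of_pos (by linarith), smul_eq_mul]
        field_simp
    _ = 2 * (Real.sqrt (π/2) * Real.exp (-t)) := by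
        rw [integral_const_mul, key2 ht]
    _ = Real.sqrt (2*π) * Real.exp (-t) := by
        rw [show (2:ℝ)*π = 4*(π/2) by ring, Real.sqrt_mul (by norm_num) (π/2),
          show Real.sqrt 4 = 2 from by
            rw [show (4:ℝ) = 2^2 by norm_num, Real.sqrt_sq (by norm_num : (0:ℝ) ≤ 2)]]
        ring

lemma gamma_Iic_neg {a r t : ℝ} (ht : t < 0) : gammaMeasure a r (Iic t) = 0 := by
  rw [gammaMeasure, withDensity_apply _ measurableSet_Iic]
  rw [setLIntegral_congr_fun_ae measurableSet_Iic
    (ae_of_all _ (fun x (hx : x ≤ t) => gammaPDF_of_neg (lt_of_le_of_lt hx ht)))]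
  simp

lemma real_exp_integral {r s : ℝ} (hr : 0 < r) (hs : 0 ≤ s) :
    ∫ x in Icc (0:ℝ) s, r * Real.exp (-(r*x)) = 1 - Real.exp (-(r*s)) := by
  have hF : ∀ x ∈ Set.uIcc (0:ℝ) s, HasDerivAt (fun x => -Real.exp (-(r*x))) (r * Real.exp (-(r*x))) x := by
    intro x _
    have h1 : HasDerivAt (fun x : ℝ => -(r*x)) (-r) x := by
      simpa using (hasDerivAt_id x).const_mul (-r)
    have h2 := (Real.hasDerivAt_exp (-(r*x))).comp x h1
    have h3 : HasDerivAt (fun x => -Real.exp (-(r*x))) (-(Real.exp (-(r*x)) * -r)) x := h2.neg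
    convert h3 using 1
    ring
  rw [integral_Icc_eq_integral_Ioc, ← intervalIntegral.integral_of_le hs,
    intervalIntegral.integral_eq_sub_of_hasDerivAt hF
      (Continuous.intervalIntegrable (by continuity) 0 s)]
  simp
  ring

lemma expM_Iic {r s : ℝ} (hr : 0 < r) (hs : 0 ≤ s) :
    gammaMeasure 1 r (Iic s) = ENNReal.ofReal (1 - Real.exp (-(r*s))) := by
  rw [gammaMeasure, withDensity_apply _ measurableSet_Iic,
    lintegral_Iic_eq_lintegral_Iio_add_Icc _ (le_refl (0:ℝ) |>.trans hs)]
  have h1 : ∫⁻ x in Iio (0:ℝ), gammaPDF 1 r x = 0 := by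
    rw [setLIntegral_congr_fun_ae measurableSet_Iio
      (ae_of_all _ (fun x (hx : x < 0) => gammaPDF_of_neg hx))]
    simp
  have h2 : ∀ x ∈ Icc (0:ℝ) s, gammaPDF 1 r x = ENNReal.ofReal (r * Real.exp (-(r*x))) := by
    intro x hx
    rw [gammaPDF_of_nonneg hx.1]
    norm_num [Real.Gamma_one, Real.rpow_one]
  rw [h1, zero_add, setLIntegral_congr_fun_ae measurableSet_Icc (ae_of_all _ h2),
    ← ofReal_integral_eq_lintegral_ofReal, real_exp_integral hr hs]
  · exact (Continuous.integrableOn_Icc (by continuity))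
  · exact ae_of_all _ (fun x => by positivity)

lemma h0pdf : ∀ y : ℝ, y ≤ 0 → gammaPDF (1/2 : ℝ) (1/2) y = 0 := by
  intro y hy
  rcases hy.lt_or_eq with h | h
  · exact gammaPDF_of_neg h
  · subst h
    rw [gammaPDF_of_nonneg le_rfl, Real.zero_rpow (by norm_num : (1/2:ℝ) - 1 ≠ 0)]
    simp

lemma hgR : IntegrableOn (fun y : ℝ => y ^ (-(1/2):ℝ) * Real.exp (-(1/2 * y))) (Ioi 0) := by
  have h := integrableOn_rpow_mul_exp_neg_mul_rpow
    (by norm_num : (-1:ℝ) < -(1/2)) (by norm_num : (0:ℝ) < 1) (by norm_num : (0:ℝ) < 1/2)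
  simp_rw [Real.rpow_one, neg_mul] at h
  exact h

lemma hgRcont : ContinuousOn (fun y : ℝ => y ^ (-(1/2):ℝ) * Real.exp (-(1/2 * y))) (Ioi 0) := by
  apply ContinuousOn.mul
  · exact ContinuousOn.rpow_const continuousOn_id (fun x hx => Or.inl (ne_of_gt hx))
  · exact Continuous.continuousOn (by continuity)

lemma int_gR : ∫ y in Ioi (0:ℝ), y ^ (-(1/2):ℝ) * Real.exp (-(1/2 * y)) = Real.sqrt (2*π) := by
  have h := integral_rpow_mul_exp_neg_mul_Ioi (by norm_num : (0:ℝ) < 1/2) (by norm_num : (0:ℝ) < 1/2)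
  simp_rw [show (1/2:ℝ) - 1 = -(1/2) by norm_num] at h
  rw [h, Real.Gamma_one_half_eq, show (1:ℝ)/(1/2) = 2 by norm_num,
    ← Real.sqrt_eq_rpow, ← Real.sqrt_mul (by norm_num : (0:ℝ) ≤ 2)]

end Aux

section Main
open Real Set

/-- If `E ~ Exp(1/2) = Gamma(1, 1/2)` and `G ~ Gamma(1/2, 1/2)` are independent, then
`√(E·G)` has the exponential distribution with rate 1, i.e. `Gamma(1, 1)`. -/
theorem stmt3 {Ω : Type*} [MeasurableSpace Ω] (P : Measure Ω) [IsProbabilityMeasure P]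
    (E G : Ω → ℝ) (hEmeas : Measurable E) (hGmeas : Measurable G)
    (hElaw : Measure.map E P = gammaMeasure 1 (1 / 2))
    (hGlaw : Measure.map G P = gammaMeasure (1 / 2) (1 / 2))
    (hEG : IndepFun E G P) :
    Measure.map (fun ω => Real.sqrt (E ω * G ω)) P = gammaMeasure 1 1 := by
  have hprν : IsProbabilityMeasure (gammaMeasure (1/2 : ℝ) (1/2)) :=
    isProbabilityMeasure_gammaMeasure (by norm_num) (by norm_num)
  have hprμ : IsProbabilityMeasure (gammaMeasure (1 : ℝ) (1/2)) :=
    isProbabilityMeasure_gammaMeasure one_pos (by norm_num)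
  have hsqm : Measurable fun p : ℝ × ℝ => Real.sqrt (p.1 * p.2) :=
    (measurable_fst.mul measurable_snd).sqrt
  have hmap : Measure.map (fun ω => (E ω, G ω)) P
      = (gammaMeasure 1 (1/2)).prod (gammaMeasure (1/2) (1/2)) := by
    rw [← hElaw, ← hGlaw]
    exact (ProbabilityTheory.indepFun_iff_map_prod_eq_prod_map_map
      hEmeas.aemeasurable hGmeas.aemeasurable).mp hEG
  have hcomp : Measure.map (fun ω => Real.sqrt (E ω * G ω)) P
      = Measure.map (fun p : ℝ × ℝ => Real.sqrt (p.1 * p.2))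
        ((gammaMeasure 1 (1/2)).prod (gammaMeasure (1/2) (1/2))) := by
    rw [← hmap, Measure.map_map hsqm (hEmeas.prodMk hGmeas)]
    rfl
  rw [hcomp]
  have hfin : IsProbabilityMeasure (Measure.map (fun p : ℝ × ℝ => Real.sqrt (p.1 * p.2))
      ((gammaMeasure 1 (1/2)).prod (gammaMeasure (1/2) (1/2)))) :=
    Measure.isProbabilityMeasure_map hsqm.aemeasurable
  refine MeasureTheory.Measure.ext_of_Iic _ _ (fun t => ?_)
  rw [Measure.map_apply hsqm measurableSet_Iic]
  rcases lt_or_ge t 0 with ht | ht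
  · have hempty : (fun p : ℝ × ℝ => Real.sqrt (p.1 * p.2)) ⁻¹' Iic t = ∅ := by
      ext p
      simp only [mem_preimage, mem_Iic, mem_empty_iff_false, iff_false, not_le]
      exact lt_of_lt_of_le ht (Real.sqrt_nonneg _)
    rw [hempty, measure_empty, gamma_Iic_neg ht]
  · rw [expM_Iic one_pos ht, one_mul]
    have hS : MeasurableSet ((fun p : ℝ × ℝ => Real.sqrt (p.1 * p.2)) ⁻¹' Iic t) :=
      hsqm measurableSet_Iic
    rw [Measure.prod_apply_symm hS]
    have hpdfmeas : Measurable (gammaPDF (1/2 : ℝ) (1/2)) :=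
      (measurable_gammaPDFReal _ _).ennreal_ofReal
    rw [show gammaMeasure (1/2 : ℝ) (1/2) = volume.withDensity (gammaPDF (1/2) (1/2)) from rfl,
      lintegral_withDensity_eq_lintegral_mul _ hpdfmeas
        (measurable_measure_prodMk_right hS)]
    rw [← lintegral_add_compl _ measurableSet_Ioi (μ := volume)]
    have hcompl : ∫⁻ y in (Ioi (0:ℝ))ᶜ,
        (gammaPDF (1/2) (1/2) * fun y => (gammaMeasure 1 (1/2))
          ((fun x => (x, y)) ⁻¹' ((fun p : ℝ × ℝ => Real.sqrt (p.1 * p.2)) ⁻¹' Iic t))) y = 0 := by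
      have hz : ∀ y ∈ (Ioi (0:ℝ))ᶜ,
          (gammaPDF (1/2) (1/2) * fun y => (gammaMeasure 1 (1/2))
            ((fun x => (x, y)) ⁻¹' ((fun p : ℝ × ℝ => Real.sqrt (p.1 * p.2)) ⁻¹' Iic t))) y
          = (fun _ => (0:ENNReal)) y := by
        intro y hy
        simp only [Pi.mul_apply]
        rw [h0pdf y (by simpa using hy), zero_mul]
      rw [setLIntegral_congr_fun_ae measurableSet_Ioi.compl (ae_of_all _ hz), lintegral_zero]
    rw [hcompl, add_zero]
    -- pointwise identification on Ioi 0
    have hsec : ∀ y : ℝ, 0 < y →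
        ((fun x => (x, y)) ⁻¹' ((fun p : ℝ × ℝ => Real.sqrt (p.1 * p.2)) ⁻¹' Iic t))
          = Iic (t^2/y) := by
      intro y hy
      ext x
      simp only [mem_preimage, mem_Iic]
      rw [Real.sqrt_le_left ht, le_div_iff₀ hy]
    have hpt : ∀ y ∈ Ioi (0:ℝ),
        (gammaPDF (1/2) (1/2) * fun y => (gammaMeasure 1 (1/2))
          ((fun x => (x, y)) ⁻¹' ((fun p : ℝ × ℝ => Real.sqrt (p.1 * p.2)) ⁻¹' Iic t))) y
        = ENNReal.ofReal (((1/2:ℝ) ^ ((1/2):ℝ) / Real.Gamma (1/2)) *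
            (y ^ (-(1/2):ℝ) * Real.exp (-(1/2 * y)) * (1 - Real.exp (-(t^2/(2*y)))))) := by
      intro y hy
      have hy' : (0:ℝ) < y := hy
      simp only [Pi.mul_apply]
      rw [hsec y hy', expM_Iic (by norm_num) (div_nonneg (sq_nonneg t) hy'.le),
        gammaPDF_of_nonneg hy'.le,
        show (1/2:ℝ) * (t^2/y) = t^2/(2*y) by ring,
        show ((1:ℝ)/2 - 1) = -(1/2) by norm_num,
        ← ENNReal.ofReal_mul (by positivity)]
      congr 1
      ring
    rw [setLIntegral_congr_fun_ae measurableSet_Ioi (ae_of_all _ hpt)]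
    -- convert to a real integral
    have hjcont : ContinuousOn
        (fun y : ℝ => y ^ (-(1/2):ℝ) * Real.exp (-(1/2 * y)) * (1 - Real.exp (-(t^2/(2*y))))) (Ioi 0) := by
      apply hgRcont.mul
      apply ContinuousOn.sub continuousOn_const
      apply ContinuousOn.rexp
      apply ContinuousOn.neg
      exact continuousOn_const.div (Continuous.continuousOn (by continuity))
        (fun y hy => by have h : (0:ℝ) < y := hy; positivity)
    have hexple : ∀ a : ℝ, 0 ≤ a → Real.exp (-a) ≤ 1 := by
      intro a ha
      rw [← Real.exp_zero]
      exact Real.exp_le_exp.mpr (by linarith)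
    have hecont : ContinuousOn (fun y : ℝ => Real.exp (-(t^2/(2*y)))) (Ioi 0) := by
      apply ContinuousOn.rexp
      apply ContinuousOn.neg
      exact continuousOn_const.div (Continuous.continuousOn (by continuity))
        (fun y hy => by have h : (0:ℝ) < y := hy; positivity)
    have hj_int : IntegrableOn
        (fun y : ℝ => y ^ (-(1/2):ℝ) * Real.exp (-(1/2 * y)) * Real.exp (-(t^2/(2*y)))) (Ioi 0) := by
      refine hgR.mono' ((hgRcont.mul hecont).aestronglyMeasurable measurableSet_Ioi) ?_
      refine (ae_restrict_iff' measurableSet_Ioi).mpr (ae_of_all _ (fun y hy => ?_))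
      have hy' : (0:ℝ) < y := hy
      have h1 : (0:ℝ) ≤ y ^ (-(1/2):ℝ) := Real.rpow_nonneg hy'.le _
      have h2 : Real.exp (-(t^2/(2*y))) ≤ 1 := hexple _ (by positivity)
      rw [Real.norm_eq_abs, abs_of_nonneg (by positivity)]
      nlinarith [Real.exp_pos (-(1/2*y)), mul_nonneg h1 (Real.exp_pos (-(1/2*y))).le]
    have hH_int : IntegrableOn
        (fun y : ℝ => y ^ (-(1/2):ℝ) * Real.exp (-(1/2 * y)) * (1 - Real.exp (-(t^2/(2*y))))) (Ioi 0) := by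
      refine hgR.mono' ((hgRcont.mul (continuousOn_const.sub hecont)).aestronglyMeasurable measurableSet_Ioi) ?_
      refine (ae_restrict_iff' measurableSet_Ioi).mpr (ae_of_all _ (fun y hy => ?_))
      have hy' : (0:ℝ) < y := hy
      have h1 : (0:ℝ) ≤ y ^ (-(1/2):ℝ) := Real.rpow_nonneg hy'.le _
      have h2 : Real.exp (-(t^2/(2*y))) ≤ 1 := hexple _ (by positivity)
      have h3 : (0:ℝ) < Real.exp (-(t^2/(2*y))) := Real.exp_pos _
      rw [Real.norm_eq_abs, abs_of_nonneg (mul_nonneg (mul_nonneg h1 (Real.exp_pos _).le) (by linarith))]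
      nlinarith [Real.exp_pos (-(1/2*y)), mul_nonneg h1 (Real.exp_pos (-(1/2*y))).le]
    have hsplit : ∫ y in Ioi (0:ℝ),
        y ^ (-(1/2):ℝ) * Real.exp (-(1/2 * y)) * (1 - Real.exp (-(t^2/(2*y))))
        = Real.sqrt (2*π) - Real.sqrt (2*π) * Real.exp (-t) := by
      calc ∫ y in Ioi (0:ℝ), y ^ (-(1/2):ℝ) * Real.exp (-(1/2 * y)) * (1 - Real.exp (-(t^2/(2*y))))
          = ∫ y in Ioi (0:ℝ), (y ^ (-(1/2):ℝ) * Real.exp (-(1/2 * y))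
            - y ^ (-(1/2):ℝ) * Real.exp (-(1/2 * y)) * Real.exp (-(t^2/(2*y)))) := by
            congr 1
            funext y
            ring
        _ = (∫ y in Ioi (0:ℝ), y ^ (-(1/2):ℝ) * Real.exp (-(1/2 * y)))
            - ∫ y in Ioi (0:ℝ), y ^ (-(1/2):ℝ) * Real.exp (-(1/2 * y)) * Real.exp (-(t^2/(2*y))) :=
            integral_sub hgR hj_int
        _ = Real.sqrt (2*π) - Real.sqrt (2*π) * Real.exp (-t) := by
            rw [int_gR]
            congr 1
            rw [← key ht]
            refine setIntegral_congr_fun measurableSet_Ioi (fun y hy => ?_)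
            rw [mul_assoc, ← Real.exp_add, sub_eq_add_neg]
    have hc1 : ((1/2:ℝ) ^ ((1/2):ℝ) / Real.Gamma (1/2)) * Real.sqrt (2*π) = 1 := by
      rw [Real.Gamma_one_half_eq, ← Real.sqrt_eq_rpow, div_mul_eq_mul_div,
        ← Real.sqrt_mul (by norm_num : (0:ℝ) ≤ 1/2), show (1/2:ℝ)*(2*π) = π by ring,
        div_self (Real.sqrt_ne_zero'.mpr Real.pi_pos)]
    rw [← ofReal_integral_eq_lintegral_ofReal ((hH_int.const_mul _))]
    · congr 1
      rw [MeasureTheory.integral_const_mul, hsplit, mul_sub, hc1, ← mul_assoc, hc1, one_mul]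
    · refine (ae_restrict_iff' measurableSet_Ioi).mpr (ae_of_all _ (fun y hy => ?_))
      have hy' : (0:ℝ) < y := hy
      have h1 : (0:ℝ) ≤ y ^ (-(1/2):ℝ) := Real.rpow_nonneg hy'.le _
      have h2 : Real.exp (-(t^2/(2*y))) ≤ 1 := hexple _ (by positivity)
      have hg : (0:ℝ) ≤ (1/2:ℝ) ^ ((1/2):ℝ) / Real.Gamma (1/2) := by positivity
      have := Real.exp_pos (-(1/2*y))
      simp only [Pi.zero_apply]
      exact mul_nonneg hg (mul_nonneg (mul_nonneg h1 this.le) (by linarith))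
end Main
end

section
/- Let α_1, …, α_n > 0 and let G_1, …, G_n be independent random variables with G_j ~ Gamma(α_j, 1); write G = G_1 + ⋯ + G_n and, for a fixed index i, write G^(i) = G − G_i. Let γ ~ Gamma(α_i + 1, 1) be independent of (G_j)_{j ≠ i}. Then for every non-negative measurable function Φ on the simplex, E[ G_i · Φ(G_1/G, …, G_n/G) ] = α_i · E[ Φ( G_1/(γ+G^(i)), …, G_{i-1}/(γ+G^(i)), γ/(γ+G^(i)), G_{i+1}/(γ+G^(i)), …, G_n/(γ+G^(i)) ) ]. -/
open MeasureTheory ProbabilityTheory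

section Aux

/-- Reconstruction of a vector from its `i`-th coordinate and the rest. -/
noncomputable def reconAux {n : ℕ} (i : Fin n) (p : ℝ × ({j : Fin n // j ≠ i} → ℝ)) :
    Fin n → ℝ :=
  fun j => if h : j = i then p.1 else p.2 ⟨j, h⟩

lemma measurable_reconAux {n : ℕ} (i : Fin n) : Measurable (reconAux i) := by
  refine measurable_pi_lambda _ fun j => ?_
  by_cases h : j = i
  · simp only [reconAux, dif_pos h]; exact measurable_fst
  · simp only [reconAux, dif_neg h]
    exact (measurable_pi_apply _).comp measurable_snd

/-- Size-bias identity for the Gamma pdf. -/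
lemma gammaPDF_sizeBias {a : ℝ} (ha : 0 < a) (x : ℝ) :
    gammaPDF a 1 x * ENNReal.ofReal x = ENNReal.ofReal a * gammaPDF (a + 1) 1 x := by
  rcases lt_or_ge x 0 with hx | hx
  · simp [gammaPDF_of_neg hx]
  · rw [gammaPDF_of_nonneg hx, gammaPDF_of_nonneg hx,
      ← ENNReal.ofReal_mul (by positivity), ← ENNReal.ofReal_mul ha.le]
    congr 1
    have hΓ : Real.Gamma (a + 1) = a * Real.Gamma a := Real.Gamma_add_one ha.ne'
    have hΓa : Real.Gamma a ≠ 0 := (Real.Gamma_pos_of_pos ha).ne'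
    rcases eq_or_lt_of_le hx with h0 | h0
    · rw [← h0]
      simp [Real.zero_rpow ha.ne', add_sub_cancel_right]
    · have hxa : x ^ (a - 1) * x = x ^ a := by
        rw [← Real.rpow_add_one h0.ne' (a - 1), sub_add_cancel]
      rw [add_sub_cancel_right, Real.one_rpow, Real.one_rpow, hΓ]
      field_simp
      rw [← hxa]

/-- 1-dimensional size-bias lemma for the Gamma measure. -/
lemma lintegral_sizeBias {a : ℝ} (ha : 0 < a) (g : ℝ → ENNReal) (hg : Measurable g) :
    ∫⁻ x, ENNReal.ofReal x * g x ∂(gammaMeasure a 1)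
      = ENNReal.ofReal a * ∫⁻ x, g x ∂(gammaMeasure (a + 1) 1) := by
  have hm1 : Measurable (gammaPDF a 1) := (measurable_gammaPDFReal a 1).ennreal_ofReal
  have hm2 : Measurable (gammaPDF (a + 1) 1) :=
    (measurable_gammaPDFReal (a + 1) 1).ennreal_ofReal
  rw [show (fun x => ENNReal.ofReal x * g x) = ENNReal.ofReal * g from rfl]
  rw [gammaMeasure, gammaMeasure,
    lintegral_withDensity_eq_lintegral_mul _ hm1 (ENNReal.measurable_ofReal.mul hg),
    lintegral_withDensity_eq_lintegral_mul _ hm2 hg]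
  simp only [Pi.mul_apply]
  rw [← lintegral_const_mul _ (show Measurable fun x => gammaPDF (a + 1) 1 x * g x from hm2.mul hg)]
  refine lintegral_congr fun x => ?_
  calc gammaPDF a 1 x * (ENNReal.ofReal x * g x)
      = (gammaPDF a 1 x * ENNReal.ofReal x) * g x := by ring
    _ = (ENNReal.ofReal a * gammaPDF (a + 1) 1 x) * g x := by rw [gammaPDF_sizeBias ha]
    _ = ENNReal.ofReal a * (gammaPDF (a + 1) 1 x * g x) := by ring

/-- The law of the tuple of independent random variables is the product measure. -/
lemma map_tuple_eq_pi {Ω : Type*} [MeasurableSpace Ω] (P : Measure Ω) [IsProbabilityMeasure P]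
    {ι : Type*} [Fintype ι] (f : ι → Ω → ℝ) (hf : ∀ j, Measurable (f j))
    (h : iIndepFun f P) :
    Measure.map (fun ω j => f j ω) P = Measure.pi (fun j => Measure.map (f j) P) := by
  haveI : ∀ j, IsProbabilityMeasure (Measure.map (f j) P) :=
    fun j => Measure.isProbabilityMeasure_map (hf j).aemeasurable
  symm
  apply Measure.pi_eq
  intro s hs
  rw [Measure.map_apply (measurable_pi_lambda _ hf) (MeasurableSet.univ_pi hs)]
  have hpre : (fun ω j => f j ω) ⁻¹' Set.pi Set.univ s = ⋂ j, f j ⁻¹' s j := by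
    ext ω; simp [Set.mem_pi]
  rw [hpre, h.meas_iInter fun j => ⟨s j, hs j, rfl⟩]
  exact Finset.prod_congr rfl fun j _ => (Measure.map_apply (hf j) (hs j)).symm

/-- Pushing a product of probability measures forward under the restriction away from `i`. -/
lemma map_restrict_pi {ι : Type*} [Fintype ι] [DecidableEq ι] (μ : ι → Measure ℝ)
    [∀ j, IsProbabilityMeasure (μ j)] (i : ι) :
    Measure.map (fun (x : ι → ℝ) (j : {j : ι // j ≠ i}) => x j.1) (Measure.pi μ)
      = Measure.pi (fun j : {j : ι // j ≠ i} => μ j.1) := by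
  classical
  have e := measurePreserving_piEquivPiSubtypeProd μ (fun j => j ≠ i)
  have hco : (fun (x : ι → ℝ) (j : {j : ι // j ≠ i}) => x j.1)
      = Prod.fst ∘ (MeasurableEquiv.piEquivPiSubtypeProd (fun _ : ι => ℝ) (fun j => j ≠ i)) := rfl
  rw [hco, ← Measure.map_map measurable_fst (MeasurableEquiv.measurable _), e.map_eq,
    Measure.map_fst_prod]
  haveI : IsProbabilityMeasure (Measure.pi fun j : {j : ι // ¬ j ≠ i} => μ j.1) :=
    inferInstance
  simp

/-- Size bias on the first coordinate of a product measure. -/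
lemma prod_sizeBias {E : Type*} [MeasurableSpace E] (ν : Measure E) [IsProbabilityMeasure ν]
    {a : ℝ} (ha : 0 < a) (K : ℝ × E → ENNReal) (hK : Measurable K) :
    ∫⁻ p, ENNReal.ofReal p.1 * K p ∂((gammaMeasure a 1).prod ν)
      = ENNReal.ofReal a * ∫⁻ p, K p ∂((gammaMeasure (a + 1) 1).prod ν) := by
  haveI := isProbabilityMeasure_gammaMeasure ha one_pos
  haveI := isProbabilityMeasure_gammaMeasure (show (0:ℝ) < a + 1 by linarith) one_pos
  have hK' : Measurable fun p : ℝ × E => ENNReal.ofReal p.1 * K p :=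
    (ENNReal.measurable_ofReal.comp measurable_fst).mul hK
  rw [lintegral_prod _ hK'.aemeasurable, lintegral_prod _ hK.aemeasurable]
  have h1 : ∀ x : ℝ, ∫⁻ y, ENNReal.ofReal x * K (x, y) ∂ν
      = ENNReal.ofReal x * ∫⁻ y, K (x, y) ∂ν :=
    fun x => lintegral_const_mul _ (hK.comp measurable_prodMk_left)
  calc ∫⁻ x, ∫⁻ y, ENNReal.ofReal x * K (x, y) ∂ν ∂(gammaMeasure a 1)
      = ∫⁻ x, ENNReal.ofReal x * ∫⁻ y, K (x, y) ∂ν ∂(gammaMeasure a 1) :=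
        lintegral_congr h1
    _ = ENNReal.ofReal a * ∫⁻ x, ∫⁻ y, K (x, y) ∂ν ∂(gammaMeasure (a + 1) 1) :=
        lintegral_sizeBias ha _ hK.lintegral_prod_right'

end Aux

/-- Let `G_1, …, G_n` be independent with `G_j ~ Gamma(α_j, 1)`, write `G = G_1 + ⋯ + G_n`
and `G^(i) = G - G_i`, and let `γ ~ Gamma(α_i + 1, 1)` be independent of `(G_j)_{j ≠ i}`.
Then for every non-negative measurable `Φ`,
`E[G_i · Φ(G_1/G, …, G_n/G)]
  = α_i · E[Φ(G_1/(γ+G^(i)), …, γ/(γ+G^(i)), …, G_n/(γ+G^(i)))]`,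
where on the right-hand side `γ` replaces the `i`-th coordinate. -/
theorem stmt7 {Ω : Type*} [MeasurableSpace Ω] (P : Measure Ω) [IsProbabilityMeasure P]
    (n : ℕ) (α : Fin n → ℝ) (hα : ∀ j, 0 < α j) (i : Fin n)
    (G : Fin n → Ω → ℝ) (γ : Ω → ℝ)
    (hGmeas : ∀ j, Measurable (G j)) (hγmeas : Measurable γ)
    (hGlaw : ∀ j, Measure.map (G j) P = gammaMeasure (α j) 1)
    (hGindep : iIndepFun G P)
    (hγlaw : Measure.map γ P = gammaMeasure (α i + 1) 1)
    (hγindep : IndepFun γ (fun ω (j : {j : Fin n // j ≠ i}) => G j.1 ω) P)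
    (Φ : (Fin n → ℝ) → ENNReal) (hΦ : Measurable Φ) :
    ∫⁻ ω, ENNReal.ofReal (G i ω) * Φ (fun j => G j ω / ∑ k, G k ω) ∂P
      = ENNReal.ofReal (α i) *
        ∫⁻ ω, Φ (fun j =>
          (if j = i then γ ω else G j ω) / (γ ω + ∑ k ∈ Finset.univ.erase i, G k ω)) ∂P := by
  classical
  haveI : ∀ j : Fin n, IsProbabilityMeasure (gammaMeasure (α j) 1) :=
    fun j => isProbabilityMeasure_gammaMeasure (hα j) one_pos
  set μsub : Measure ({j : Fin n // j ≠ i} → ℝ) :=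
    Measure.pi (fun j => gammaMeasure (α j.1) 1) with hμsub
  haveI : IsProbabilityMeasure μsub := by
    haveI : ∀ j : {j : Fin n // j ≠ i}, IsProbabilityMeasure (gammaMeasure (α j.1) 1) :=
      fun j => inferInstance
    exact MeasureTheory.Measure.pi.instIsProbabilityMeasure _
  -- the sub-tuple and its law
  set sub : Ω → ({j : Fin n // j ≠ i} → ℝ) := fun ω j => G j.1 ω with hsubdef
  have hsubmeas : Measurable sub := measurable_pi_lambda _ fun j => hGmeas j.1
  have hfull : Measure.map (fun ω (j : Fin n) => G j ω) P
      = Measure.pi (fun j => gammaMeasure (α j) 1) := by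
    rw [map_tuple_eq_pi P G hGmeas hGindep]
    exact congrArg Measure.pi (funext fun j => hGlaw j)
  have hsublaw : Measure.map sub P = μsub := by
    have hrmeas : Measurable fun (x : Fin n → ℝ) (j : {j : Fin n // j ≠ i}) => x j.1 :=
      measurable_pi_lambda _ fun j => measurable_pi_apply j.1
    have hco : sub = (fun (x : Fin n → ℝ) (j : {j : Fin n // j ≠ i}) => x j.1)
        ∘ (fun ω (j : Fin n) => G j ω) := rfl
    rw [hco, ← Measure.map_map hrmeas (measurable_pi_lambda _ hGmeas), hfull, map_restrict_pi]
  -- independence of G i from the rest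
  have hGi_indep : IndepFun (G i) sub P := by
    have h := hGindep.indepFun_finset {i} (Finset.univ.erase i)
      (Finset.disjoint_singleton_left.2 (Finset.notMem_erase i _)) hGmeas
    have h2 := h.comp
      (φ := fun g : ({i} : Finset (Fin n)) → ℝ => g ⟨i, Finset.mem_singleton_self i⟩)
      (ψ := fun g : (↥(Finset.univ.erase i)) → ℝ =>
        fun j : {j : Fin n // j ≠ i} => g ⟨j.1, Finset.mem_erase.2 ⟨j.2, Finset.mem_univ _⟩⟩)
      (show Measurable fun g : ({i} : Finset (Fin n)) → ℝ => g ⟨i, Finset.mem_singleton_self i⟩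
        from measurable_pi_apply _)
      (measurable_pi_lambda _ fun j => measurable_pi_apply _)
    exact h2
  -- laws of the pairs
  have hpairLmeas : Measurable fun ω => (G i ω, sub ω) := (hGmeas i).prodMk hsubmeas
  have hpairRmeas : Measurable fun ω => (γ ω, sub ω) := hγmeas.prodMk hsubmeas
  have hpairL : Measure.map (fun ω => (G i ω, sub ω)) P
      = (gammaMeasure (α i) 1).prod μsub := by
    rw [← hGlaw i, ← hsublaw]
    exact (indepFun_iff_map_prod_eq_prod_map_map (hGmeas i).aemeasurable
      hsubmeas.aemeasurable).mp hGi_indep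
  have hpairR : Measure.map (fun ω => (γ ω, sub ω)) P
      = (gammaMeasure (α i + 1) 1).prod μsub := by
    rw [← hγlaw, ← hsublaw]
    exact (indepFun_iff_map_prod_eq_prod_map_map hγmeas.aemeasurable
      hsubmeas.aemeasurable).mp hγindep
  -- the integrand on the product space
  set K : ℝ × ({j : Fin n // j ≠ i} → ℝ) → ENNReal :=
    fun p => Φ (fun j => reconAux i p j / ∑ k, reconAux i p k) with hKdef
  have hKmeas : Measurable K := by
    refine hΦ.comp (measurable_pi_lambda _ fun j => Measurable.div ?_ ?_)
    · exact (measurable_pi_apply j).comp (measurable_reconAux i)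
    · exact Finset.measurable_sum _ fun k _ =>
        (measurable_pi_apply k).comp (measurable_reconAux i)
  -- rewriting the left-hand side
  have hreconL : ∀ ω, reconAux i (G i ω, sub ω) = fun j => G j ω := by
    intro ω; funext j
    by_cases h : j = i
    · subst h; simp [reconAux]
    · simp [reconAux, dif_neg h, hsubdef]
  have hLHS : ∫⁻ ω, ENNReal.ofReal (G i ω) * Φ (fun j => G j ω / ∑ k, G k ω) ∂P
      = ∫⁻ p, ENNReal.ofReal p.1 * K p ∂((gammaMeasure (α i) 1).prod μsub) := by
    have hfmeas : Measurable fun p : ℝ × ({j : Fin n // j ≠ i} → ℝ) =>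
        ENNReal.ofReal p.1 * K p := measurable_fst.ennreal_ofReal.mul hKmeas
    have hmap := lintegral_map (μ := P) (g := fun ω => (G i ω, sub ω))
      (f := fun p => ENNReal.ofReal p.1 * K p) hfmeas hpairLmeas
    rw [hpairL] at hmap
    rw [hmap]
    refine lintegral_congr fun ω => ?_
    simp only [hKdef, hreconL ω]
  -- rewriting the right-hand side
  have hreconR : ∀ ω, reconAux i (γ ω, sub ω) = fun j => if j = i then γ ω else G j ω := by
    intro ω; funext j
    by_cases h : j = i
    · subst h; simp [reconAux]
    · simp [reconAux, dif_neg h, if_neg h, hsubdef]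
  have hsumR : ∀ ω, (∑ k, if k = i then γ ω else G k ω)
      = γ ω + ∑ k ∈ Finset.univ.erase i, G k ω := by
    intro ω
    rw [← Finset.add_sum_erase _ _ (Finset.mem_univ i)]
    congr 1
    · simp
    · refine Finset.sum_congr rfl fun k hk => ?_
      rw [if_neg (Finset.ne_of_mem_erase hk)]
  have hRHS : ∫⁻ ω, Φ (fun j =>
        (if j = i then γ ω else G j ω) / (γ ω + ∑ k ∈ Finset.univ.erase i, G k ω)) ∂P
      = ∫⁻ p, K p ∂((gammaMeasure (α i + 1) 1).prod μsub) := by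
    have hmap := lintegral_map (μ := P) (g := fun ω => (γ ω, sub ω)) (f := K)
      hKmeas hpairRmeas
    rw [hpairR] at hmap
    rw [hmap]
    refine lintegral_congr fun ω => ?_
    simp only [hKdef, hreconR ω]
    rw [hsumR ω]
  rw [hLHS, hRHS, prod_sizeBias μsub (hα i) K hKmeas]
end

section
/- Let m ≥ 1 and n ≥ 1 be integers. Suppose (C, A) is a random vector taking values in (0,∞)² whose joint density with respect to Lebesgue measure is proportional to c^{m+2(n−1)} (a + c) exp(−(a+c)²/2). Then V = C/(C+A) and W = C + A are independent random variables; V has density (m+2n−1)·v^{m+2n−2} on (0,1) (equivalently, (V, 1−V) ~ Dirichlet(m+2n−1, 1)); W has density proportional to w^{m+2n} e^{−w²/2} on (0,∞); and W² ~ Gamma((m+2n+1)/2, 1/2). -/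
open MeasureTheory ProbabilityTheory Set
open scoped ENNReal
namespace Stmt8Aux

lemma setLIntegral_inter {α : Type*} [MeasurableSpace α] (μ : Measure α) {f : α → ℝ≥0∞}
    {U : Set α} (hU : MeasurableSet U) (h0 : ∀ x, x ∉ U → f x = 0) (B : Set α) :
    ∫⁻ x in B, f x ∂μ = ∫⁻ x in U ∩ B, f x ∂μ := by
  have hf : ∀ x, f x = U.indicator f x := fun x =>
    (Set.indicator_apply_eq_self.2 (h0 x)).symm
  calc ∫⁻ x in B, f x ∂μ = ∫⁻ x in B, U.indicator f x ∂μ := lintegral_congr fun x => hf x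
    _ = ∫⁻ x in U, f x ∂(μ.restrict B) := lintegral_indicator hU f
    _ = ∫⁻ x in U ∩ B, f x ∂μ := by rw [Measure.restrict_restrict hU]

noncomputable def Sm : ℝ × ℝ → ℝ × ℝ := fun p => (p.1 * p.2, (1 - p.1) * p.2)

noncomputable def Tm : ℝ × ℝ → ℝ × ℝ := fun q => (q.1 / (q.1 + q.2), q.1 + q.2)

lemma measurable_Tm : Measurable Tm :=
  (measurable_fst.div (measurable_fst.add measurable_snd)).prodMk
    (measurable_fst.add measurable_snd)

lemma measurable_Sm : Measurable Sm :=
  (measurable_fst.mul measurable_snd).prodMk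
    ((measurable_const.sub measurable_fst).mul measurable_snd)

noncomputable def Bm (p : ℝ × ℝ) : ℝ × ℝ →L[ℝ] ℝ × ℝ :=
  LinearMap.toContinuousLinearMap (Matrix.toLin (Module.Basis.finTwoProd ℝ) (Module.Basis.finTwoProd ℝ)
    !![p.2, p.1; -p.2, 1 - p.1])

lemma hasFDerivAt_Sm (p : ℝ × ℝ) : HasFDerivAt Sm (Bm p) p := by
  unfold Bm
  rw [Matrix.toLin_finTwoProd_toContinuousLinearMap]
  convert HasFDerivAt.prodMk (𝕜 := ℝ)
    ((hasFDerivAt_fst (𝕜 := ℝ) (p := p)).mul (hasFDerivAt_snd (𝕜 := ℝ) (p := p)))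
    (((hasFDerivAt_const (1 : ℝ) p).sub (hasFDerivAt_fst (𝕜 := ℝ) (p := p))).mul
      (hasFDerivAt_snd (𝕜 := ℝ) (p := p))) using 1
  · rfl
  · rfl
  · rfl
  · funext q; rfl
  ext q <;> simp <;> ring

lemma det_Bm (p : ℝ × ℝ) : (Bm p).det = p.2 := by
  simp only [Bm, LinearMap.det_toContinuousLinearMap, LinearMap.det_toLin,
    Matrix.det_fin_two_of]
  ring

lemma map_Tm_withDensity {f : ℝ × ℝ → ℝ≥0∞} (hf : Measurable f)
    (h0 : ∀ q : ℝ × ℝ, ¬(0 < q.1 ∧ 0 < q.2) → f q = 0) :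
    Measure.map Tm (volume.withDensity f)
      = volume.withDensity
          (fun p => ({p : ℝ × ℝ | 0 < p.1 ∧ p.1 < 1 ∧ 0 < p.2}).indicator
            (fun p => ENNReal.ofReal p.2 * f (Sm p)) p) := by
  set R : Set (ℝ × ℝ) := {p | 0 < p.1 ∧ p.1 < 1 ∧ 0 < p.2} with hR
  set Q : Set (ℝ × ℝ) := {q | 0 < q.1 ∧ 0 < q.2} with hQ
  have hRmeas : MeasurableSet R := by
    have : R = (Ioo (0:ℝ) 1) ×ˢ (Ioi (0:ℝ)) := by
      ext p; simp [hR, mem_Ioo, mem_Ioi, and_assoc]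
    rw [this]; exact measurableSet_Ioo.prod measurableSet_Ioi
  have hQmeas : MeasurableSet Q := by
    have : Q = (Ioi (0:ℝ)) ×ˢ (Ioi (0:ℝ)) := by
      ext q; simp [hQ, mem_Ioi]
    rw [this]; exact measurableSet_Ioi.prod measurableSet_Ioi
  have hTS : ∀ p ∈ R, Tm (Sm p) = p := by
    rintro ⟨v, w⟩ ⟨hv0, hv1, hw⟩
    simp only [Sm, Tm]
    rw [show v * w + (1 - v) * w = w by ring, mul_div_assoc, div_self hw.ne', mul_one]
  have hST : ∀ q ∈ Q, Sm (Tm q) = q := by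
    rintro ⟨c, a⟩ ⟨hc, ha⟩
    have hca : (0:ℝ) < c + a := by linarith
    simp only [Sm, Tm]
    have h1 : c / (c + a) * (c + a) = c := div_mul_cancel₀ c hca.ne'
    have h2 : (1 - c / (c + a)) * (c + a) = a := by field_simp; ring
    rw [h1, h2]
  have hTmem : ∀ q ∈ Q, Tm q ∈ R := by
    rintro ⟨c, a⟩ ⟨hc, ha⟩
    have hca : (0:ℝ) < c + a := by linarith
    exact ⟨div_pos hc hca, (div_lt_one hca).2 (by linarith), hca⟩
  have hSmem : ∀ p ∈ R, Sm p ∈ Q := by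
    rintro ⟨v, w⟩ ⟨hv0, hv1, hw⟩
    exact ⟨mul_pos hv0 hw, mul_pos (by linarith) hw⟩
  have hinj : InjOn Sm R := fun p hp p' hp' h => by
    have h2 := congrArg Tm h
    rwa [hTS p hp, hTS p' hp'] at h2
  ext s hs
  rw [Measure.map_apply measurable_Tm hs, withDensity_apply _ (measurable_Tm hs),
    withDensity_apply _ hs]
  rw [setLIntegral_inter volume hQmeas (fun q hq => h0 q hq) (Tm ⁻¹' s),
    setLIntegral_inter volume hRmeas (fun p hp => Set.indicator_of_notMem hp _) s]
  have himg : Q ∩ Tm ⁻¹' s = Sm '' (R ∩ s) := by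
    ext q
    constructor
    · rintro ⟨hq, hqs⟩
      exact ⟨Tm q, ⟨hTmem q hq, hqs⟩, hST q hq⟩
    · rintro ⟨p, ⟨hpR, hps⟩, rfl⟩
      refine ⟨hSmem p hpR, ?_⟩
      rw [Set.mem_preimage, hTS p hpR]
      exact hps
  rw [himg, lintegral_image_eq_lintegral_abs_det_fderiv_mul volume (hRmeas.inter hs)
    (fun p _ => (hasFDerivAt_Sm p).hasFDerivWithinAt) (hinj.mono inter_subset_left) f]
  refine setLIntegral_congr_fun (hRmeas.inter hs) ?_
  intro p hp
  beta_reduce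
  rw [det_Bm, abs_of_pos hp.1.2.2, Set.indicator_of_mem hp.1]

end Stmt8Aux

namespace Stmt8Aux
open Real

lemma withDensity_prod_eq {f g : ℝ → ℝ} (hf : Measurable f) (hg : Measurable g) :
    (volume.withDensity fun v => ENNReal.ofReal (f v)).prod
      (volume.withDensity fun w => ENNReal.ofReal (g w))
    = (volume : Measure (ℝ × ℝ)).withDensity
        (fun p => ENNReal.ofReal (f p.1) * ENNReal.ofReal (g p.2)) := by
  refine Measure.prod_eq fun s t hs ht => ?_
  rw [withDensity_apply _ (hs.prod ht)]
  have hres : (volume : Measure (ℝ × ℝ)).restrict (s ×ˢ t)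
      = (volume.restrict s).prod (volume.restrict t) := by
    rw [Measure.volume_eq_prod, Measure.prod_restrict]
  rw [hres, lintegral_prod_mul hf.ennreal_ofReal.aemeasurable hg.ennreal_ofReal.aemeasurable,
    withDensity_apply _ hs, withDensity_apply _ ht]

lemma lintegral_image_abs_deriv {s : Set ℝ} {f f' : ℝ → ℝ} (hs : MeasurableSet s)
    (hf' : ∀ x ∈ s, HasDerivWithinAt f (f' x) s x) (hf : InjOn f s) (g : ℝ → ℝ≥0∞) :
    ∫⁻ x in f '' s, g x = ∫⁻ x in s, ENNReal.ofReal |f' x| * g (f x) := by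
  simpa only [ContinuousLinearMap.det_toSpanSingleton] using
    lintegral_image_eq_lintegral_abs_det_fderiv_mul volume hs
      (fun x hx => (hf' x hx).hasFDerivWithinAt) hf g

lemma map_sq_withDensity {h : ℝ → ℝ≥0∞} (hh : Measurable h) (h0 : ∀ w, ¬0 < w → h w = 0) :
    Measure.map (fun x : ℝ => x ^ 2) (volume.withDensity h)
      = volume.withDensity fun y =>
          (Ioi (0:ℝ)).indicator
            (fun y => ENNReal.ofReal |1 / (2 * Real.sqrt y)| * h (Real.sqrt y)) y := by
  have hmeas_sq : Measurable fun x : ℝ => x ^ 2 := measurable_id.pow_const 2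
  ext t ht
  rw [Measure.map_apply hmeas_sq ht, withDensity_apply _ (hmeas_sq ht), withDensity_apply _ ht]
  rw [setLIntegral_inter volume measurableSet_Ioi (fun w hw => h0 w (by simpa using hw)) _,
    setLIntegral_inter volume measurableSet_Ioi
      (fun y hy => Set.indicator_of_notMem hy _) t]
  have himg : Ioi (0:ℝ) ∩ (fun x : ℝ => x ^ 2) ⁻¹' t = Real.sqrt '' (Ioi 0 ∩ t) := by
    ext w
    constructor
    · rintro ⟨hw, hwt⟩
      refine ⟨w ^ 2, ⟨?_, hwt⟩, ?_⟩
      · exact pow_pos (show (0:ℝ) < w from hw) 2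
      · rw [Real.sqrt_sq hw.le]
    · rintro ⟨y, ⟨hy, hyt⟩, rfl⟩
      refine ⟨Real.sqrt_pos.2 hy, ?_⟩
      show Real.sqrt y ^ 2 ∈ t
      rw [Real.sq_sqrt (le_of_lt hy)]
      exact hyt
  have hinj : InjOn Real.sqrt (Ioi (0:ℝ) ∩ t) := fun y hy y' hy' e => by
    rw [← Real.sq_sqrt hy.1.le, e, Real.sq_sqrt hy'.1.le]
  rw [himg, lintegral_image_abs_deriv (measurableSet_Ioi.inter ht)
    (fun y hy => (Real.hasDerivAt_sqrt (ne_of_gt hy.1)).hasDerivWithinAt) hinj h]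
  refine setLIntegral_congr_fun (measurableSet_Ioi.inter ht) ?_
  intro y hy
  rw [Set.indicator_of_mem hy.1]

end Stmt8Aux

open Stmt8Aux Real

/-- Let `m, n ≥ 1` and let `(C, A)` be a random vector in `(0,∞)²` with joint density
proportional to `c^(m+2(n-1)) (a+c) exp(-(a+c)²/2)`.  Then `V = C/(C+A)` and `W = C+A`
are independent, `V` has density `(m+2n-1)·v^(m+2n-2)` on `(0,1)`, `W` has density
proportional to `w^(m+2n) e^(-w²/2)` on `(0,∞)`, and `W² ~ Gamma((m+2n+1)/2, 1/2)`. -/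
theorem stmt8 {Ω : Type*} [MeasurableSpace Ω] (P : Measure Ω) [IsProbabilityMeasure P]
    (m n : ℕ) (hm : 1 ≤ m) (hn : 1 ≤ n)
    (C A : Ω → ℝ) (hCmeas : Measurable C) (hAmeas : Measurable A)
    (hdens : ∃ κ : ℝ, 0 < κ ∧
      Measure.map (fun ω => (C ω, A ω)) P
        = (volume : Measure (ℝ × ℝ)).withDensity fun p =>
            ENNReal.ofReal (if 0 < p.1 ∧ 0 < p.2
              then κ * p.1 ^ (m + 2 * (n - 1)) * (p.2 + p.1) *
                Real.exp (-(p.2 + p.1) ^ 2 / 2)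
              else 0)) :
    IndepFun (fun ω => C ω / (C ω + A ω)) (fun ω => C ω + A ω) P ∧
    Measure.map (fun ω => C ω / (C ω + A ω)) P
      = volume.withDensity (fun v => ENNReal.ofReal
          (if 0 < v ∧ v < 1 then ((m : ℝ) + 2 * n - 1) * v ^ (m + 2 * n - 2) else 0)) ∧
    (∃ c : ℝ, 0 < c ∧
      Measure.map (fun ω => C ω + A ω) P
        = volume.withDensity (fun w => ENNReal.ofReal
            (if 0 < w then c * w ^ (m + 2 * n) * Real.exp (-w ^ 2 / 2) else 0))) ∧
    Measure.map (fun ω => (C ω + A ω) ^ 2) P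
      = gammaMeasure (((m : ℝ) + 2 * n + 1) / 2) (1 / 2) := by
  obtain ⟨κ, hκ, hmap⟩ := hdens
  set k := m + 2 * (n - 1) with hkdef
  have hk2 : k + 2 = m + 2 * n := by omega
  have hk1 : k = m + 2 * n - 2 := by omega
  have hkr : (k : ℝ) + 2 = (m : ℝ) + 2 * n := by
    have := congrArg (Nat.cast : ℕ → ℝ) hk2
    push_cast at this
    linarith
  have hk1pos : (0:ℝ) < (k : ℝ) + 1 := by positivity
  -- the joint density of (C, A)
  set fd : ℝ × ℝ → ℝ≥0∞ := fun q => ENNReal.ofReal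
    (if 0 < q.1 ∧ 0 < q.2 then κ * q.1 ^ k * (q.2 + q.1) * Real.exp (-(q.2 + q.1) ^ 2 / 2)
      else 0) with hfd
  have hfd_meas : Measurable fd := by
    apply Measurable.ennreal_ofReal
    refine Measurable.ite ?_ ?_ measurable_const
    · exact (measurableSet_lt measurable_const measurable_fst).inter
        (measurableSet_lt measurable_const measurable_snd)
    · exact ((measurable_const.mul (measurable_fst.pow_const k)).mul
        (measurable_snd.add measurable_fst)).mul
        (Real.measurable_exp.comp
          (((measurable_snd.add measurable_fst).pow_const 2).neg.div_const 2))
  have hfd0 : ∀ q : ℝ × ℝ, ¬(0 < q.1 ∧ 0 < q.2) → fd q = 0 := fun q hq => by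
    simp [hfd, if_neg hq]
  set V := fun ω => C ω / (C ω + A ω) with hVdef
  set W := fun ω => C ω + A ω with hWdef
  have hVmeas : Measurable V := hCmeas.div (hCmeas.add hAmeas)
  have hWmeas : Measurable W := hCmeas.add hAmeas
  have hpair : Measurable fun ω => (C ω, A ω) := hCmeas.prodMk hAmeas
  have hmap' : Measure.map (fun ω => (C ω, A ω)) P = volume.withDensity fd := hmap
  have hVW : Measure.map (fun ω => (V ω, W ω)) P
      = Measure.map Tm (Measure.map (fun ω => (C ω, A ω)) P) := by
    rw [Measure.map_map measurable_Tm hpair]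
    rfl
  -- marginal densities (unnormalized)
  set g1 : ℝ → ℝ := fun v => if 0 < v ∧ v < 1 then v ^ k else 0 with hg1
  set g2 : ℝ → ℝ := fun w => if 0 < w then κ * w ^ (k + 2) * Real.exp (-w ^ 2 / 2) else 0
    with hg2
  have hg1_meas : Measurable g1 := by
    refine Measurable.ite ?_ (measurable_id.pow_const k) measurable_const
    exact (measurableSet_lt measurable_const measurable_id).inter
      (measurableSet_lt measurable_id measurable_const)
  have hg2_meas : Measurable g2 := by
    refine Measurable.ite measurableSet_Ioi ?_ measurable_const
    exact (measurable_const.mul (measurable_id.pow_const (k+2))).mul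
      (Real.measurable_exp.comp ((measurable_id.pow_const 2).neg.div_const 2))
  have hg1_nn : ∀ v, 0 ≤ g1 v := by
    intro v; rw [hg1]; dsimp only; split_ifs with h
    · exact pow_nonneg h.1.le k
    · exact le_refl 0
  have hg2_nn : ∀ w, 0 ≤ g2 w := by
    intro w; rw [hg2]; dsimp only; split_ifs with h
    · positivity
    · exact le_refl 0
  have hprod_dens : (fun p : ℝ × ℝ =>
        ({p : ℝ × ℝ | 0 < p.1 ∧ p.1 < 1 ∧ 0 < p.2}).indicator
          (fun p => ENNReal.ofReal p.2 * fd (Sm p)) p)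
      = fun p => ENNReal.ofReal (g1 p.1) * ENNReal.ofReal (g2 p.2) := by
    funext p
    obtain ⟨v, w⟩ := p
    by_cases hp : (0:ℝ) < v ∧ v < 1 ∧ 0 < w
    · obtain ⟨hv0, hv1, hw⟩ := hp
      have hmem : ((v, w) : ℝ × ℝ) ∈ {p : ℝ × ℝ | 0 < p.1 ∧ p.1 < 1 ∧ 0 < p.2} :=
        ⟨hv0, hv1, hw⟩
      rw [Set.indicator_of_mem hmem]
      simp only [hfd, hg1, hg2, Sm]
      rw [if_pos (show (0:ℝ) < v * w ∧ 0 < (1 - v) * w from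
            ⟨mul_pos hv0 hw, mul_pos (by linarith) hw⟩),
        if_pos (show (0:ℝ) < v ∧ v < 1 from ⟨hv0, hv1⟩), if_pos hw]
      rw [show (1 - v) * w + v * w = w by ring]
      rw [← ENNReal.ofReal_mul hw.le, ← ENNReal.ofReal_mul (pow_nonneg hv0.le k)]
      congr 1
      ring
    · have hnmem : ((v, w) : ℝ × ℝ) ∉ {p : ℝ × ℝ | 0 < p.1 ∧ p.1 < 1 ∧ 0 < p.2} := by
        simpa using hp
      rw [Set.indicator_of_notMem hnmem]
      simp only [hg1, hg2]
      by_cases h1 : (0:ℝ) < v ∧ v < 1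
      · have h2 : ¬(0:ℝ) < w := fun hw => hp ⟨h1.1, h1.2, hw⟩
        rw [if_neg h2]
        simp
      · rw [if_neg h1]
        simp
  set ν1 := volume.withDensity fun v => ENNReal.ofReal (g1 v) with hν1
  set ν2 := volume.withDensity fun w => ENNReal.ofReal (g2 w) with hν2
  have hjoint : Measure.map (fun ω => (V ω, W ω)) P = ν1.prod ν2 := by
    rw [hVW, hmap', map_Tm_withDensity hfd_meas hfd0, hprod_dens, hν1, hν2,
      withDensity_prod_eq hg1_meas hg2_meas]
  have hPVW : IsProbabilityMeasure (Measure.map (fun ω => (V ω, W ω)) P) :=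
    Measure.isProbabilityMeasure_map (hVmeas.prodMk hWmeas).aemeasurable
  have hmass : ν1 univ * ν2 univ = 1 := by
    have h := hPVW.measure_univ
    rw [hjoint] at h
    rw [← h, ← univ_prod_univ, Measure.prod_prod]
  have hM1 : ν1 univ = ENNReal.ofReal (1 / ((k:ℝ) + 1)) := by
    rw [hν1, withDensity_apply _ MeasurableSet.univ, Measure.restrict_univ]
    have hind : ∀ v : ℝ, ENNReal.ofReal (g1 v)
        = (Ioo (0:ℝ) 1).indicator (fun v => ENNReal.ofReal (v ^ k)) v := by
      intro v
      by_cases h : (0:ℝ) < v ∧ v < 1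
      · rw [Set.indicator_of_mem (mem_Ioo.2 h), hg1]
        simp only [if_pos h]
      · rw [Set.indicator_of_notMem (fun hc => h (mem_Ioo.1 hc)), hg1]
        simp only [if_neg h, ENNReal.ofReal_zero]
    rw [lintegral_congr hind, lintegral_indicator measurableSet_Ioo]
    have hint : IntegrableOn (fun v : ℝ => v ^ k) (Ioo 0 1) volume :=
      (((continuous_pow k).integrableOn_Icc (a := (0:ℝ)) (b := 1))).mono_set
        Ioo_subset_Icc_self
    have hnn : 0 ≤ᵐ[volume.restrict (Ioo (0:ℝ) 1)] fun v : ℝ => v ^ k :=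
      (ae_restrict_iff' measurableSet_Ioo).2
        (Filter.Eventually.of_forall fun v hv => pow_nonneg hv.1.le k)
    rw [← ofReal_integral_eq_lintegral_ofReal hint hnn]
    congr 1
    rw [← MeasureTheory.integral_Ioc_eq_integral_Ioo,
      ← intervalIntegral.integral_of_le (zero_le_one), integral_pow]
    push_cast
    rw [one_pow, zero_pow (by positivity), sub_zero]
  have haux : ENNReal.ofReal ((k:ℝ) + 1) * ν1 univ = 1 := by
    rw [hM1, ← ENNReal.ofReal_mul hk1pos.le, mul_one_div, div_self hk1pos.ne',
      ENNReal.ofReal_one]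
  have hM2 : ν2 univ = ENNReal.ofReal ((k:ℝ) + 1) := by
    calc ν2 univ = 1 * ν2 univ := (one_mul _).symm
      _ = ENNReal.ofReal ((k:ℝ) + 1) * ν1 univ * ν2 univ := by rw [haux]
      _ = ENNReal.ofReal ((k:ℝ) + 1) * (ν1 univ * ν2 univ) := by rw [mul_assoc]
      _ = ENNReal.ofReal ((k:ℝ) + 1) := by rw [hmass, mul_one]
  -- marginals
  have hmapV : Measure.map V P = ν2 univ • ν1 := by
    have h : Measure.map V P
        = Measure.map Prod.fst (Measure.map (fun ω => (V ω, W ω)) P) := by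
      rw [Measure.map_map measurable_fst (hVmeas.prodMk hWmeas)]
      rfl
    rw [h, hjoint, Measure.map_fst_prod]
  have hmapW : Measure.map W P = ν1 univ • ν2 := by
    have h : Measure.map W P
        = Measure.map Prod.snd (Measure.map (fun ω => (V ω, W ω)) P) := by
      rw [Measure.map_map measurable_snd (hVmeas.prodMk hWmeas)]
      rfl
    rw [h, hjoint, Measure.map_snd_prod]
  -- scaled marginal densities
  have hVd' : Measure.map V P
      = volume.withDensity (fun v => ENNReal.ofReal (((k:ℝ) + 1) * g1 v)) := by
    rw [hmapV, hM2, hν1, ← withDensity_smul _ hg1_meas.ennreal_ofReal]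
    congr 1
    funext v
    simp only [Pi.smul_apply, smul_eq_mul]
    rw [← ENNReal.ofReal_mul hk1pos.le]
  have hWd' : Measure.map W P
      = volume.withDensity (fun w => ENNReal.ofReal ((1 / ((k:ℝ) + 1)) * g2 w)) := by
    rw [hmapW, hM1, hν2, ← withDensity_smul _ hg2_meas.ennreal_ofReal]
    congr 1
    funext w
    simp only [Pi.smul_apply, smul_eq_mul]
    rw [← ENNReal.ofReal_mul (by positivity : (0:ℝ) ≤ 1 / ((k:ℝ) + 1))]
  -- independence
  have hindep : IndepFun V W P := by
    rw [indepFun_iff_map_prod_eq_prod_map_map hVmeas.aemeasurable hWmeas.aemeasurable,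
      hjoint, hVd', hWd',
      withDensity_prod_eq (f := fun v => ((k:ℝ) + 1) * g1 v) (g := fun w => (1 / ((k:ℝ) + 1)) * g2 w)
        (measurable_const.mul hg1_meas) (measurable_const.mul hg2_meas),
      hν1, hν2, withDensity_prod_eq hg1_meas hg2_meas]
    congr 1
    funext p
    rw [← ENNReal.ofReal_mul (hg1_nn p.1),
      ← ENNReal.ofReal_mul (mul_nonneg hk1pos.le (hg1_nn p.1))]
    congr 1
    field_simp
  -- final density of V
  have hVfinal : Measure.map V P = volume.withDensity (fun v => ENNReal.ofReal
      (if 0 < v ∧ v < 1 then ((m : ℝ) + 2 * n - 1) * v ^ (m + 2 * n - 2) else 0)) := by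
    rw [hVd']
    congr 1
    funext v
    congr 1
    simp only [hg1]
    rw [mul_ite, mul_zero]
    split_ifs with h
    · have hconst : ((k:ℝ) + 1) = (m:ℝ) + 2 * n - 1 := by linarith
      rw [hconst, hk1]
    · rfl
  -- final density of W
  set c0 := κ / ((k:ℝ) + 1) with hc0
  have hc0pos : 0 < c0 := by rw [hc0]; positivity
  have hWfinal : Measure.map W P = volume.withDensity (fun w => ENNReal.ofReal
      (if 0 < w then c0 * w ^ (m + 2 * n) * Real.exp (-w ^ 2 / 2) else 0)) := by
    rw [hWd']
    congr 1
    funext w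
    congr 1
    simp only [hg2]
    rw [mul_ite, mul_zero]
    split_ifs with h
    · rw [← hk2, hc0]
      ring
    · rfl
  -- the gamma part
  set α : ℝ := ((m : ℝ) + 2 * n + 1) / 2 with hαdef
  have hm1 : (1:ℝ) ≤ (m:ℝ) := by exact_mod_cast hm
  have hn1 : (1:ℝ) ≤ (n:ℝ) := by exact_mod_cast hn
  have hαpos : 0 < α := by rw [hαdef]; positivity
  have hα1 : α - 1 = ((m:ℝ) + 2 * n - 1) / 2 := by rw [hαdef]; ring
  have hα1pos : 0 < α - 1 := by rw [hα1]; linarith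
  have hD_meas : Measurable (fun w => ENNReal.ofReal
      (if 0 < w then c0 * w ^ (m + 2 * n) * Real.exp (-w ^ 2 / 2) else 0)) := by
    apply Measurable.ennreal_ofReal
    refine Measurable.ite measurableSet_Ioi ?_ measurable_const
    exact (measurable_const.mul (measurable_id.pow_const (m + 2 * n))).mul
      (Real.measurable_exp.comp ((measurable_id.pow_const 2).neg.div_const 2))
  have hD0 : ∀ w : ℝ, ¬0 < w → ENNReal.ofReal
      (if 0 < w then c0 * w ^ (m + 2 * n) * Real.exp (-w ^ 2 / 2) else 0) = 0 := by
    intro w hw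
    rw [if_neg hw, ENNReal.ofReal_zero]
  have hsq : Measure.map (fun ω => (C ω + A ω) ^ 2) P
      = Measure.map (fun x : ℝ => x ^ 2) (Measure.map W P) := by
    have hsqm : Measurable fun x : ℝ => x ^ 2 := measurable_id.pow_const 2
    rw [Measure.map_map hsqm hWmeas]
    rfl
  set t0 := c0 / 2 * Real.Gamma α / ((1/2 : ℝ) ^ α) with ht0
  have hΓpos : 0 < Real.Gamma α := Real.Gamma_pos_of_pos hαpos
  have hrppos : (0:ℝ) < (1/2 : ℝ) ^ α := Real.rpow_pos_of_pos (by norm_num) α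
  have ht0pos : 0 < t0 := by
    rw [ht0]
    exact div_pos (mul_pos (by positivity) hΓpos) hrppos
  have hpdf_meas : Measurable (gammaPDF α (1/2)) :=
    (measurable_gammaPDFReal α (1/2)).ennreal_ofReal
  have hpt : ∀ y : ℝ, (Ioi (0:ℝ)).indicator
      (fun y => ENNReal.ofReal |1 / (2 * Real.sqrt y)| *
        ENNReal.ofReal (if 0 < Real.sqrt y
          then c0 * Real.sqrt y ^ (m + 2 * n) * Real.exp (-Real.sqrt y ^ 2 / 2) else 0)) y
      = ENNReal.ofReal t0 * gammaPDF α (1/2) y := by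
    intro y
    by_cases hy : 0 < y
    · rw [Set.indicator_of_mem (mem_Ioi.2 hy)]
      have hsy : 0 < Real.sqrt y := Real.sqrt_pos.2 hy
      rw [if_pos hsy, Real.sq_sqrt hy.le, gammaPDF_of_nonneg hy.le,
        abs_of_pos (by positivity : (0:ℝ) < 1 / (2 * Real.sqrt y)),
        ← ENNReal.ofReal_mul (by positivity : (0:ℝ) ≤ 1 / (2 * Real.sqrt y)),
        ← ENNReal.ofReal_mul ht0pos.le]
      congr 1
      have hNpow : Real.sqrt y ^ (m + 2 * n) = Real.sqrt y * y ^ (α - 1) := by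
        have h1 : m + 2 * n = (m + 2 * n - 1) + 1 := by omega
        rw [h1, pow_succ, mul_comm]
        congr 1
        rw [Real.sqrt_eq_rpow]
        rw [← Real.rpow_natCast (y ^ ((1:ℝ)/2)) (m + 2 * n - 1), ← Real.rpow_mul hy.le]
        congr 1
        have hcast : ((m + 2 * n - 1 : ℕ) : ℝ) = (m:ℝ) + 2 * n - 1 := by
          have h2 : (m + 2 * n - 1) + 1 = m + 2 * n := by omega
          have := congrArg (Nat.cast : ℕ → ℝ) h2
          push_cast at this
          linarith
        rw [hcast, hα1]
        ring
      rw [hNpow, ht0, show (-(1/2 * y) : ℝ) = -y / 2 by ring]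
      field_simp
    · rw [Set.indicator_of_notMem (by simpa using hy)]
      rcases lt_or_eq_of_le (not_lt.1 hy) with h | h
      · rw [gammaPDF_of_neg h, mul_zero]
      · subst h
        rw [gammaPDF_of_nonneg le_rfl, Real.zero_rpow (ne_of_gt hα1pos)]
        simp
  have hgamma : Measure.map (fun ω => (C ω + A ω) ^ 2) P = gammaMeasure α (1/2) := by
    have heq : Measure.map (fun ω => (C ω + A ω) ^ 2) P
        = ENNReal.ofReal t0 • gammaMeasure α (1/2) := by
      rw [hsq, hWfinal, map_sq_withDensity hD_meas hD0]
      have hfun : (fun y => (Ioi (0:ℝ)).indicator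
          (fun y => ENNReal.ofReal |1 / (2 * Real.sqrt y)| *
            ENNReal.ofReal (if 0 < Real.sqrt y
              then c0 * Real.sqrt y ^ (m + 2 * n) * Real.exp (-Real.sqrt y ^ 2 / 2) else 0)) y)
          = fun y => ENNReal.ofReal t0 * gammaPDF α (1/2) y := funext hpt
      rw [hfun, show (fun y => ENNReal.ofReal t0 * gammaPDF α (1/2) y)
          = ENNReal.ofReal t0 • gammaPDF α (1/2) from rfl,
        withDensity_smul _ hpdf_meas]
      rfl
    have hprob2 : IsProbabilityMeasure (Measure.map (fun ω => (C ω + A ω) ^ 2) P) :=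
      Measure.isProbabilityMeasure_map ((hWmeas.pow_const 2).aemeasurable)
    have hgprob : IsProbabilityMeasure (gammaMeasure α (1/2)) :=
      isProbabilityMeasure_gammaMeasure hαpos (by norm_num)
    have h1 : ENNReal.ofReal t0 = 1 := by
      have := congrArg (fun μ : Measure ℝ => μ univ) heq
      simp only [hprob2.measure_univ, Measure.smul_apply, smul_eq_mul,
        hgprob.measure_univ, mul_one] at this
      exact this.symm
    rw [heq, h1, one_smul]
  exact ⟨hindep, hVfinal, ⟨c0, hc0pos, hWfinal⟩, hgamma⟩
end

section
/- Suppose (M_1, M_2) is a random vector in (0,∞)² whose joint density with respect to Lebesgue measure is proportional to (m_1 + m_2) · exp(−(m_1 + m_2)²/2). Then (M_1, M_2) has the same distribution as (√Γ·U, √Γ·(1−U)), where Γ ~ Gamma(3/2, 1/2) and U is uniform on [0,1], independent of Γ. -/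
open MeasureTheory ProbabilityTheory Set Real

noncomputable section Stmt11Aux

def Tmap : ℝ × ℝ → ℝ × ℝ := fun q => (Real.sqrt q.1 * q.2, Real.sqrt q.1 * (1 - q.2))

def Bmap (q : ℝ × ℝ) : ℝ × ℝ →L[ℝ] ℝ × ℝ :=
  LinearMap.toContinuousLinearMap (Matrix.toLin (Module.Basis.finTwoProd ℝ) (Module.Basis.finTwoProd ℝ)
    !![q.2 / (2 * Real.sqrt q.1), Real.sqrt q.1;
       (1 - q.2) / (2 * Real.sqrt q.1), -Real.sqrt q.1])

def Smap : Set (ℝ × ℝ) := Ioi (0:ℝ) ×ˢ Ioo (0:ℝ) 1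

def cMc : ℝ := Real.sqrt 2 / Real.sqrt π

def hMd : ℝ × ℝ → ENNReal :=
  fun z => gammaPDF (3/2) (1/2) z.1 * (Ioo (0:ℝ) 1).indicator 1 z.2

def fMd : ℝ × ℝ → ENNReal := fun p =>
  ENNReal.ofReal (if 0 < p.1 ∧ 0 < p.2
    then cMc * (p.1 + p.2) * Real.exp (-(p.1 + p.2) ^ 2 / 2) else 0)

def gMd : ℝ × ℝ → ENNReal := fun p =>
  ENNReal.ofReal (if 0 < p.1 ∧ 0 < p.2
    then (p.1 + p.2) * Real.exp (-(p.1 + p.2) ^ 2 / 2) else 0)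

lemma cMc_pos : 0 < cMc := div_pos (Real.sqrt_pos.2 two_pos) (Real.sqrt_pos.2 Real.pi_pos)

lemma measurableSet_Smap : MeasurableSet Smap := measurableSet_Ioi.prod measurableSet_Ioo

lemma continuous_Tmap : Continuous Tmap :=
  ((continuous_fst.sqrt).mul continuous_snd).prodMk
    ((continuous_fst.sqrt).mul (continuous_const.sub continuous_snd))

lemma Bmap_det {q : ℝ × ℝ} (hq : 0 < q.1) : (Bmap q).det = -(1/2 : ℝ) := by
  have h : Real.sqrt q.1 ≠ 0 := (Real.sqrt_pos.2 hq).ne'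
  simp only [Bmap, LinearMap.det_toContinuousLinearMap, LinearMap.det_toLin,
    Matrix.det_fin_two_of]
  field_simp
  ring

lemma hasFDerivAt_Tmap {q : ℝ × ℝ} (hq : 0 < q.1) : HasFDerivAt Tmap (Bmap q) q := by
  rw [Bmap, Matrix.toLin_finTwoProd_toContinuousLinearMap]
  have h1 : HasFDerivAt (fun p : ℝ × ℝ => Real.sqrt p.1)
      ((1 / (2 * Real.sqrt q.1)) • ContinuousLinearMap.fst ℝ ℝ ℝ) q :=
    (Real.hasDerivAt_sqrt hq.ne').comp_hasFDerivAt q hasFDerivAt_fst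
  convert HasFDerivAt.prodMk (𝕜 := ℝ)
    (h1.mul hasFDerivAt_snd)
    (h1.mul ((hasFDerivAt_const (1:ℝ) q).sub hasFDerivAt_snd)) using 2 <;>
  · ext p <;> simp [Tmap, smul_smul, div_eq_inv_mul, mul_comm, mul_assoc, mul_left_comm]

lemma injOn_Tmap : Set.InjOn Tmap Smap := by
  rintro ⟨a, u⟩ ⟨ha, hu⟩ ⟨b, v⟩ ⟨hb, hv⟩ h
  simp only [Tmap, Prod.mk.injEq] at h
  have ha0 : (0:ℝ) < a := ha
  have hb0 : (0:ℝ) < b := hb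
  have hab : Real.sqrt a = Real.sqrt b := by nlinarith [h.1, h.2]
  have ha' : a = b := by
    have := congrArg (· ^ 2) hab
    simpa [Real.sq_sqrt ha0.le, Real.sq_sqrt hb0.le] using this
  subst ha'
  have hs : Real.sqrt a ≠ 0 := (Real.sqrt_pos.2 ha0).ne'
  have huv : u = v := by
    have h1 := h.1
    rw [hab] at h1
    exact mul_left_cancel₀ hs h1
  exact Prod.ext rfl huv

lemma image_Tmap : Tmap '' Smap = Ioi (0:ℝ) ×ˢ Ioi (0:ℝ) := by
  ext p
  constructor
  · rintro ⟨⟨γ, u⟩, ⟨hγ, hu0, hu1⟩, rfl⟩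
    have hγ0 : (0:ℝ) < γ := hγ
    have hu0' : (0:ℝ) < u := hu0
    have hsg : 0 < Real.sqrt γ := Real.sqrt_pos.2 hγ0
    exact ⟨mul_pos hsg hu0', mul_pos hsg (by simp only at hu1 ⊢; linarith)⟩
  · rintro ⟨ha, hb⟩
    obtain ⟨a, b⟩ := p
    have ha : (0:ℝ) < a := ha
    have hb : (0:ℝ) < b := hb
    refine ⟨((a + b) ^ 2, a / (a + b)), ⟨mem_Ioi.2 (by positivity),
      div_pos ha (by linarith), (div_lt_one (by linarith)).2 (by linarith)⟩, ?_⟩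
    have hs : Real.sqrt ((a + b) ^ 2) = a + b := Real.sqrt_sq (by linarith)
    simp only [Tmap, hs, Prod.mk.injEq]
    constructor <;> field_simp <;> ring

lemma gamma_three_half : Real.Gamma (3/2) = Real.sqrt π / 2 := by
  rw [show (3/2 : ℝ) = 1/2 + 1 by norm_num, Real.Gamma_add_one (by norm_num),
    Real.Gamma_one_half_eq]
  ring

lemma half_rpow : (1/2 : ℝ) ^ (3/2 : ℝ) = Real.sqrt 2 / 4 := by
  rw [show (3/2 : ℝ) = (3 : ℕ) * (1/2 : ℝ) by norm_num, Real.rpow_mul (by norm_num),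
    Real.rpow_natCast]
  have h : ((1/2 : ℝ) ^ (3:ℕ)) = 1/8 := by norm_num
  rw [h, ← Real.sqrt_eq_rpow]
  rw [show (1/8 : ℝ) = (Real.sqrt 2 / 4)^2 by
    rw [div_pow, Real.sq_sqrt (by norm_num : (0:ℝ) ≤ 2)]; norm_num]
  exact Real.sqrt_sq (by positivity)

lemma gammaPDFReal_eq {γ : ℝ} (hγ : 0 < γ) :
    gammaPDFReal (3/2) (1/2) γ = (1/2) * (cMc * Real.sqrt γ * Real.exp (-γ/2)) := by
  rw [gammaPDFReal, if_pos hγ.le, half_rpow, gamma_three_half,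
    show (3/2 - 1 : ℝ) = 1/2 by norm_num, ← Real.sqrt_eq_rpow,
    show -((1/2 : ℝ) * γ) = -γ/2 by ring, cMc]
  have hπ : Real.sqrt π ≠ 0 := (Real.sqrt_pos.2 Real.pi_pos).ne'
  field_simp
  ring

lemma prod_repr :
    (gammaMeasure (3/2) (1/2)).prod (volume.restrict (Ioo (0:ℝ) 1))
      = (volume : Measure (ℝ × ℝ)).withDensity hMd := by
  haveI : IsProbabilityMeasure (gammaMeasure (3/2) (1/2)) :=
    isProbabilityMeasure_gammaMeasure (by norm_num) (by norm_num)
  rw [gammaMeasure, ← withDensity_indicator_one measurableSet_Ioo]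
  haveI : SigmaFinite ((volume : Measure ℝ).withDensity (gammaPDF (3/2) (1/2))) := by
    rw [← gammaMeasure]; infer_instance
  haveI : SigmaFinite ((volume : Measure ℝ).withDensity ((Ioo (0:ℝ) 1).indicator 1)) := by
    rw [withDensity_indicator_one measurableSet_Ioo]; infer_instance
  refine Measure.prod_eq fun s t hs ht => ?_
  rw [withDensity_apply _ (hs.prod ht), Measure.volume_eq_prod, ← Measure.prod_restrict]
  simp only [hMd]
  rw [lintegral_prod_mul (f := gammaPDF (3/2) (1/2)) (g := (Ioo (0:ℝ) 1).indicator 1)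
      ((measurable_gammaPDFReal _ _).ennreal_ofReal).aemeasurable
      (measurable_const.indicator measurableSet_Ioo).aemeasurable,
    withDensity_apply _ hs, withDensity_apply _ ht]

lemma hMd_eq_zero {z : ℝ × ℝ} (hz : z ∉ Smap) : hMd z = 0 := by
  by_cases h2 : z.2 ∈ Ioo (0:ℝ) 1
  · have h1 : ¬ (0 < z.1) := fun h1 => hz ⟨h1, h2⟩
    rcases lt_or_eq_of_le (not_lt.1 h1) with h | h
    · simp [hMd, gammaPDF_of_neg h]
    · have hzero : gammaPDF (3/2) (1/2) z.1 = 0 := by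
        rw [gammaPDF, gammaPDFReal, if_pos h.ge, h,
          show (3/2 - 1 : ℝ) = 1/2 by norm_num, Real.zero_rpow (by norm_num)]
        simp
      simp only [hMd]
      rw [hzero, zero_mul]
  · simp [hMd, indicator_of_notMem h2]

lemma fMd_eq_zero {p : ℝ × ℝ} (hp : p ∉ Ioi (0:ℝ) ×ˢ Ioi (0:ℝ)) : fMd p = 0 := by
  have h : ¬ (0 < p.1 ∧ 0 < p.2) := hp
  simp [fMd, h]

lemma key_density {x : ℝ × ℝ} (hx : x ∈ Smap) :
    hMd x = ENNReal.ofReal |(Bmap x).det| * fMd (Tmap x) := by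
  obtain ⟨γ, u⟩ := x
  obtain ⟨hγ, hu⟩ := hx
  have hγ0 : (0:ℝ) < γ := hγ
  have hu0 : (0:ℝ) < u := hu.1
  have hu1 : u < 1 := hu.2
  have hsg : 0 < Real.sqrt γ := Real.sqrt_pos.2 hγ0
  have hT1 : 0 < Real.sqrt γ * u := mul_pos hsg hu0
  have hT2 : 0 < Real.sqrt γ * (1 - u) := mul_pos hsg (by linarith)
  rw [Bmap_det hγ0, show |(-(1/2) : ℝ)| = 1/2 by norm_num]
  simp only [hMd, fMd, Tmap]
  rw [indicator_of_mem hu]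
  simp only [hT1, hT2, and_self, ↓reduceIte]
  simp only [Pi.one_apply, mul_one]
  rw [show Real.sqrt γ * u + Real.sqrt γ * (1 - u) = Real.sqrt γ by ring,
    Real.sq_sqrt hγ0.le, gammaPDF, gammaPDFReal_eq hγ0,
    ← ENNReal.ofReal_mul (by norm_num : (0:ℝ) ≤ 1/2)]

lemma map_repr :
    Measure.map Tmap ((volume : Measure (ℝ × ℝ)).withDensity hMd)
      = (volume : Measure (ℝ × ℝ)).withDensity fMd := by
  have hTm : Measurable Tmap := continuous_Tmap.measurable
  ext A hA
  rw [Measure.map_apply hTm hA, withDensity_apply _ (hTm hA), withDensity_apply _ hA]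
  have hindL : ∀ z ∈ Tmap ⁻¹' A, hMd z = Smap.indicator hMd z := by
    intro z _
    by_cases hz : z ∈ Smap
    · rw [indicator_of_mem hz]
    · rw [indicator_of_notMem hz, hMd_eq_zero hz]
  have hindR : ∀ p ∈ A, fMd p = (Ioi (0:ℝ) ×ˢ Ioi (0:ℝ)).indicator fMd p := by
    intro p _
    by_cases hp : p ∈ Ioi (0:ℝ) ×ˢ Ioi (0:ℝ)
    · rw [indicator_of_mem hp]
    · rw [indicator_of_notMem hp, fMd_eq_zero hp]
  rw [setLIntegral_congr_fun (hTm hA) hindL,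
    setLIntegral_congr_fun hA hindR,
    setLIntegral_indicator measurableSet_Smap,
    setLIntegral_indicator (measurableSet_Ioi.prod measurableSet_Ioi)]
  have himg : Tmap '' (Smap ∩ Tmap ⁻¹' A) = (Ioi (0:ℝ) ×ˢ Ioi (0:ℝ)) ∩ A := by
    rw [← image_Tmap]
    exact Set.image_inter_preimage Tmap Smap A
  rw [← himg, lintegral_image_eq_lintegral_abs_det_fderiv_mul volume
    (measurableSet_Smap.inter (hTm hA))
    (fun x hx => (hasFDerivAt_Tmap hx.1.1).hasFDerivWithinAt)
    (injOn_Tmap.mono inter_subset_left) fMd]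
  exact setLIntegral_congr_fun (measurableSet_Smap.inter (hTm hA))
    (fun x hx => key_density hx.1)

lemma density_decomp (κ : ℝ) (hκ : 0 ≤ κ) :
    (fun p : ℝ × ℝ => ENNReal.ofReal (if 0 < p.1 ∧ 0 < p.2
        then κ * (p.1 + p.2) * Real.exp (-(p.1 + p.2) ^ 2 / 2) else 0))
      = fun p => ENNReal.ofReal κ * gMd p := by
  funext p
  by_cases hp : 0 < p.1 ∧ 0 < p.2
  · simp only [gMd, if_pos hp, ← ENNReal.ofReal_mul hκ, mul_assoc]
  · simp [gMd, hp]

lemma fMd_decomp : fMd = fun p => ENNReal.ofReal cMc * gMd p := density_decomp cMc cMc_pos.le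

end Stmt11Aux

/-- Let `(M_1, M_2)` be a random vector in `(0,∞)²` with joint density proportional to
`(m_1 + m_2)·exp(-(m_1 + m_2)²/2)`.  Then `(M_1, M_2)` has the same distribution as
`(√Γ·U, √Γ·(1-U))` where `Γ ~ Gamma(3/2, 1/2)` and `U` is uniform on `[0,1]`,
independent of `Γ`. -/
theorem stmt11 {Ω : Type*} [MeasurableSpace Ω] (P : Measure Ω) [IsProbabilityMeasure P]
    (M : Ω → ℝ × ℝ) (hMmeas : Measurable M)
    (hdens : ∃ κ : ℝ, 0 < κ ∧
      Measure.map M P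
        = (volume : Measure (ℝ × ℝ)).withDensity fun p =>
            ENNReal.ofReal (if 0 < p.1 ∧ 0 < p.2
              then κ * (p.1 + p.2) * Real.exp (-(p.1 + p.2) ^ 2 / 2)
              else 0)) :
    Measure.map M P
      = Measure.map (fun q : ℝ × ℝ => (Real.sqrt q.1 * q.2, Real.sqrt q.1 * (1 - q.2)))
          ((gammaMeasure (3 / 2) (1 / 2)).prod (volume.restrict (Set.Icc (0 : ℝ) 1))) := by
  obtain ⟨κ, hκ, hmap⟩ := hdens
  have hRHS : Measure.map (fun q : ℝ × ℝ => (Real.sqrt q.1 * q.2, Real.sqrt q.1 * (1 - q.2)))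
      ((gammaMeasure (3 / 2) (1 / 2)).prod (volume.restrict (Set.Icc (0 : ℝ) 1)))
      = (volume : Measure (ℝ × ℝ)).withDensity fMd := by
    rw [show (fun q : ℝ × ℝ => (Real.sqrt q.1 * q.2, Real.sqrt q.1 * (1 - q.2))) = Tmap from rfl,
      show volume.restrict (Set.Icc (0:ℝ) 1) = volume.restrict (Set.Ioo (0:ℝ) 1) from
        (Measure.restrict_congr_set Ioo_ae_eq_Icc).symm,
      prod_repr, map_repr]
  -- RHS is a probability measure
  haveI hPgamma : IsProbabilityMeasure (gammaMeasure (3/2 : ℝ) (1/2 : ℝ)) :=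
    isProbabilityMeasure_gammaMeasure (by norm_num) (by norm_num)
  haveI hPIcc : IsProbabilityMeasure (volume.restrict (Set.Icc (0:ℝ) 1)) := by
    constructor
    rw [Measure.restrict_apply_univ, Real.volume_Icc]
    norm_num
  have hPf : IsProbabilityMeasure ((volume : Measure (ℝ × ℝ)).withDensity fMd) := by
    rw [← hRHS]
    exact Measure.isProbabilityMeasure_map continuous_Tmap.measurable.aemeasurable
  have hPM : IsProbabilityMeasure (Measure.map M P) :=
    Measure.isProbabilityMeasure_map hMmeas.aemeasurable
  -- compute masses
  have m1 : ENNReal.ofReal κ * ∫⁻ p, gMd p = 1 := by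
    have h1 : (Measure.map M P) Set.univ = 1 := measure_univ
    rw [hmap, density_decomp κ hκ.le, withDensity_apply _ MeasurableSet.univ,
      Measure.restrict_univ, lintegral_const_mul' _ _ ENNReal.ofReal_ne_top] at h1
    exact h1
  have m2 : ENNReal.ofReal cMc * ∫⁻ p, gMd p = 1 := by
    have h2 : ((volume : Measure (ℝ × ℝ)).withDensity fMd) Set.univ = 1 := hPf.measure_univ
    rw [fMd_decomp, withDensity_apply _ MeasurableSet.univ,
      Measure.restrict_univ, lintegral_const_mul' _ _ ENNReal.ofReal_ne_top] at h2
    exact h2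
  set I := ∫⁻ p, gMd p with hI
  have hI0 : I ≠ 0 := by
    intro h
    rw [h, mul_zero] at m1
    exact one_ne_zero m1.symm
  have hItop : I ≠ ⊤ := by
    intro h
    rw [h, ENNReal.mul_top (by simpa using hκ : ENNReal.ofReal κ ≠ 0)] at m1
    exact (ENNReal.top_ne_one) m1
  have hκc : ENNReal.ofReal κ = ENNReal.ofReal cMc := by
    calc ENNReal.ofReal κ = ENNReal.ofReal κ * I * I⁻¹ := by
          rw [mul_assoc, ENNReal.mul_inv_cancel hI0 hItop, mul_one]
      _ = ENNReal.ofReal cMc * I * I⁻¹ := by rw [m1, m2]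
      _ = ENNReal.ofReal cMc := by
          rw [mul_assoc, ENNReal.mul_inv_cancel hI0 hItop, mul_one]
  rw [hmap, hRHS, density_decomp κ hκ.le, fMd_decomp, hκc]
end

section
/- Fix an integer m ≥ 1. Let (W_n)_{n ≥ 0} be a sequence of positive random variables on a common probability space such that almost surely W_n ≤ W_{n+1} for all n, and such that for every n the random variable W_n² has the Gamma((m+2n+1)/2, 1/2) distribution. Then W_n / √(m+2n+1) → 1 almost surely as n → ∞. -/
open MeasureTheory ProbabilityTheory Filter

section GammaAux
open Real

lemma gamma_exp_lintegral {a r s : ℝ} (ha : 0 < a) (hr : 0 < r) (hs : s < r) :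
    ∫⁻ x, ENNReal.ofReal (Real.exp (s * x)) ∂(gammaMeasure a r)
      = ENNReal.ofReal ((r / (r - s)) ^ a) := by
  have hrs : 0 < r - s := by linarith
  have hmpdf : Measurable (gammaPDF a r) := (measurable_gammaPDFReal a r).ennreal_ofReal
  rw [gammaMeasure, lintegral_withDensity_eq_lintegral_mul _ hmpdf (by fun_prop)]
  have key : ∀ x : ℝ, (gammaPDF a r x) * ENNReal.ofReal (Real.exp (s * x))
      = ENNReal.ofReal ((r / (r - s)) ^ a) * gammaPDF a (r - s) x := by
    intro x
    rcases le_or_gt 0 x with hx | hx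
    · rw [gammaPDF_of_nonneg hx, gammaPDF_of_nonneg hx,
        ← ENNReal.ofReal_mul (by positivity), ← ENNReal.ofReal_mul (by positivity)]
      congr 1
      have h1 : (r / (r - s)) ^ a * ((r-s) ^ a) = r ^ a := by
        rw [Real.div_rpow hr.le hrs.le, div_mul_cancel₀]
        exact (Real.rpow_pos_of_pos hrs a).ne'
      have h2 : Real.exp (-(r * x)) * Real.exp (s * x) = Real.exp (-((r - s) * x)) := by
        rw [← Real.exp_add]; ring_nf
      field_simp [gammaPDFReal]
      rw [mul_comm x s, mul_assoc, h2, ← h1, mul_comm x (r - s)]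
      ring
    · rw [gammaPDF_of_neg hx, gammaPDF_of_neg hx, zero_mul, mul_zero]
  simp only [Pi.mul_apply]
  simp_rw [key]
  have hmpdf2 : Measurable (gammaPDF a (r-s)) := (measurable_gammaPDFReal a (r-s)).ennreal_ofReal
  rw [lintegral_const_mul _ hmpdf2, lintegral_gammaPDF_eq_one ha hrs, mul_one]

lemma gamma_tail_ge {a r s c : ℝ} (ha : 0 < a) (hr : 0 < r) (hs0 : 0 < s) (hs : s < r) :
    gammaMeasure a r {x | c ≤ x}
      ≤ ENNReal.ofReal (Real.exp (-(s*c)) * (r/(r-s)) ^ a) := by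
  have hint := gamma_exp_lintegral ha hr hs
  have hsub : {x : ℝ | c ≤ x} ⊆
      {x | ENNReal.ofReal (Real.exp (s*c)) ≤ ENNReal.ofReal (Real.exp (s*x))} := by
    intro x hx
    simp only [Set.mem_setOf_eq] at *
    exact ENNReal.ofReal_le_ofReal (Real.exp_le_exp.2 (by nlinarith))
  calc gammaMeasure a r {x | c ≤ x}
      ≤ gammaMeasure a r
        {x | ENNReal.ofReal (Real.exp (s*c)) ≤ ENNReal.ofReal (Real.exp (s*x))} :=
        measure_mono hsub
    _ ≤ (∫⁻ x, ENNReal.ofReal (Real.exp (s*x)) ∂(gammaMeasure a r))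
          / ENNReal.ofReal (Real.exp (s*c)) :=
        meas_ge_le_lintegral_div (by fun_prop)
          (ENNReal.ofReal_pos.2 (Real.exp_pos _)).ne' ENNReal.ofReal_ne_top
    _ = ENNReal.ofReal (Real.exp (-(s*c)) * (r/(r-s)) ^ a) := by
        rw [hint, ← ENNReal.ofReal_div_of_pos (Real.exp_pos _)]
        congr 1
        rw [Real.exp_neg, div_eq_inv_mul]

lemma gamma_tail_le {a r s c : ℝ} (ha : 0 < a) (hr : 0 < r) (hs0 : 0 < s) :
    gammaMeasure a r {x | x ≤ c}
      ≤ ENNReal.ofReal (Real.exp (s*c) * (r/(r+s)) ^ a) := by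
  have hint := gamma_exp_lintegral ha hr (show -s < r by linarith)
  rw [sub_neg_eq_add] at hint
  have hsub : {x : ℝ | x ≤ c} ⊆
      {x | ENNReal.ofReal (Real.exp (-s*c)) ≤ ENNReal.ofReal (Real.exp (-s*x))} := by
    intro x hx
    simp only [Set.mem_setOf_eq] at *
    exact ENNReal.ofReal_le_ofReal (Real.exp_le_exp.2 (by nlinarith))
  calc gammaMeasure a r {x | x ≤ c}
      ≤ gammaMeasure a r
        {x | ENNReal.ofReal (Real.exp (-s*c)) ≤ ENNReal.ofReal (Real.exp (-s*x))} :=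
        measure_mono hsub
    _ ≤ (∫⁻ x, ENNReal.ofReal (Real.exp (-s*x)) ∂(gammaMeasure a r))
          / ENNReal.ofReal (Real.exp (-s*c)) :=
        meas_ge_le_lintegral_div (by fun_prop)
          (ENNReal.ofReal_pos.2 (Real.exp_pos _)).ne' ENNReal.ofReal_ne_top
    _ = ENNReal.ofReal (Real.exp (s*c) * (r/(r+s)) ^ a) := by
        rw [hint, ← ENNReal.ofReal_div_of_pos (Real.exp_pos _)]
        congr 1
        rw [div_eq_inv_mul, ← Real.exp_neg]
        ring_nf

lemma gamma_conc_upper {a ε c : ℝ} (ha : 0 < a) (hε : 0 < ε) (hc : c = (1+ε)*(2*a)) :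
    gammaMeasure a (1/2) {x | c ≤ x} ≤ ENNReal.ofReal (((1+ε) * Real.exp (-ε)) ^ a) := by
  have hs0 : 0 < ε/(2*(1+ε)) := by positivity
  have hs : ε/(2*(1+ε)) < 1/2 := by rw [div_lt_iff₀ (by positivity)]; nlinarith
  refine le_trans (gamma_tail_ge ha (by norm_num) hs0 hs) (le_of_eq ?_)
  congr 1
  have h1ε : (1+ε) ≠ 0 := by positivity
  have e1 : (ε/(2*(1+ε))) * c = ε * a := by rw [hc]; field_simp
  have e2 : (1/2 : ℝ)/(1/2 - ε/(2*(1+ε))) = 1+ε := by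
    have h3 : (1/2:ℝ) - ε/(2*(1+ε)) = 1/(2*(1+ε)) := by field_simp; ring
    rw [h3]
    field_simp
  rw [e1, e2, Real.mul_rpow (by positivity) (Real.exp_pos _).le, ← Real.exp_mul]
  ring_nf

lemma gamma_conc_lower {a ε c : ℝ} (ha : 0 < a) (hε : 0 < ε) (hε1 : ε < 1)
    (hc : c = (1-ε)*(2*a)) :
    gammaMeasure a (1/2) {x | x ≤ c} ≤ ENNReal.ofReal (((1-ε) * Real.exp ε) ^ a) := by
  have h1ε : (0:ℝ) < 1 - ε := by linarith
  have hs0 : 0 < ε/(2*(1-ε)) := by positivity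
  refine le_trans (gamma_tail_le ha (by norm_num) hs0) (le_of_eq ?_)
  congr 1
  have e1 : (ε/(2*(1-ε))) * c = ε * a := by rw [hc]; field_simp
  have e2 : (1/2 : ℝ)/(1/2 + ε/(2*(1-ε))) = 1-ε := by
    have h3 : (1/2:ℝ) + ε/(2*(1-ε)) = 1/(2*(1-ε)) := by field_simp; ring
    rw [h3]
    field_simp
  rw [e1, e2, Real.mul_rpow h1ε.le (Real.exp_pos _).le, ← Real.exp_mul]
  ring_nf

lemma tsum_ofReal_rpow_ne_top {q : ℝ} (hq0 : 0 < q) (hq1 : q < 1) (f : ℕ → ℝ)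
    (hf : ∀ n : ℕ, (n:ℝ) + 1 ≤ f n) :
    ∑' n : ℕ, ENNReal.ofReal (q ^ (f n)) ≠ ⊤ := by
  have hle : ∀ n : ℕ, ENNReal.ofReal (q ^ f n) ≤ ENNReal.ofReal (q ^ (n+1) : ℝ) := by
    intro n
    apply ENNReal.ofReal_le_ofReal
    calc q ^ f n ≤ q ^ (((n+1 : ℕ)) : ℝ) :=
          Real.rpow_le_rpow_of_exponent_ge hq0 hq1.le (by push_cast; linarith [hf n])
      _ = q ^ (n+1) := Real.rpow_natCast q (n+1)
  refine ne_top_of_le_ne_top ?_ (ENNReal.tsum_le_tsum hle)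
  have hsumm : Summable (fun n : ℕ => q ^ (n+1)) := by
    have := (summable_geometric_of_lt_one hq0.le hq1).mul_right q
    simpa [pow_succ] using this
  rw [← ENNReal.ofReal_tsum_of_nonneg (fun n => by positivity) hsumm]
  exact ENNReal.ofReal_ne_top
end GammaAux

/-- Let `m ≥ 1` and let `(W_n)` be positive random variables, almost surely
non-decreasing in `n`, with `W_n² ~ Gamma((m+2n+1)/2, 1/2)` for every `n`.  Then
`W_n / √(m+2n+1) → 1` almost surely. -/
theorem stmt14 {Ω : Type*} [MeasurableSpace Ω] (P : Measure Ω) [IsProbabilityMeasure P]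
    (m : ℕ) (hm : 1 ≤ m) (W : ℕ → Ω → ℝ)
    (hWmeas : ∀ n, Measurable (W n))
    (hpos : ∀ᵐ ω ∂P, ∀ n, 0 < W n ω)
    (hmono : ∀ᵐ ω ∂P, ∀ n, W n ω ≤ W (n + 1) ω)
    (hlaw : ∀ n, Measure.map (fun ω => (W n ω) ^ 2) P
      = gammaMeasure (((m : ℝ) + 2 * n + 1) / 2) (1 / 2)) :
    ∀ᵐ ω ∂P, Tendsto (fun n => W n ω / Real.sqrt ((m : ℝ) + 2 * n + 1))
      atTop (nhds 1) := by
  have hXmeas : ∀ n, Measurable fun ω => (W n ω) ^ 2 := fun n => (hWmeas n).pow_const 2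
  have hrpos : ∀ n : ℕ, (0:ℝ) < (m:ℝ) + 2 * n + 1 := fun n => by positivity
  have hapos : ∀ n : ℕ, (0:ℝ) < ((m:ℝ) + 2 * n + 1) / 2 := fun n => by positivity
  have hage : ∀ n : ℕ, (n:ℝ) + 1 ≤ ((m:ℝ) + 2 * n + 1) / 2 := by
    intro n
    have : (1:ℝ) ≤ (m:ℝ) := by exact_mod_cast hm
    linarith
  -- key concentration estimate for a fixed ε ∈ (0,1)
  have key : ∀ ε : ℝ, 0 < ε → ε < 1 → ∀ᵐ ω ∂P, ∀ᶠ n in atTop,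
      (W n ω) ^ 2 < (1+ε) * ((m:ℝ) + 2 * n + 1) ∧
      (1-ε) * ((m:ℝ) + 2 * n + 1) < (W n ω) ^ 2 := by
    intro ε hε hε1
    set S : ℕ → Set Ω := fun n =>
      {ω | (1+ε) * ((m:ℝ) + 2 * n + 1) ≤ (W n ω) ^ 2} ∪
      {ω | (W n ω) ^ 2 ≤ (1-ε) * ((m:ℝ) + 2 * n + 1)} with hS
    have hq1 : (0:ℝ) < (1+ε) * Real.exp (-ε) := by positivity
    have hq2 : (0:ℝ) < (1-ε) * Real.exp ε := by nlinarith [Real.exp_pos ε]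
    have hq1lt : (1+ε) * Real.exp (-ε) < 1 := by
      have h := Real.add_one_lt_exp hε.ne'
      have h2 := mul_lt_mul_of_pos_right h (Real.exp_pos (-ε))
      rw [← Real.exp_add, add_neg_cancel, Real.exp_zero] at h2
      nlinarith
    have hq2lt : (1-ε) * Real.exp ε < 1 := by
      have h := Real.add_one_lt_exp (neg_ne_zero.2 hε.ne')
      have h2 := mul_lt_mul_of_pos_right h (Real.exp_pos ε)
      rw [← Real.exp_add, neg_add_cancel, Real.exp_zero] at h2
      nlinarith
    have hbound : ∀ n, P (S n) ≤
        ENNReal.ofReal (((1+ε) * Real.exp (-ε)) ^ (((m:ℝ) + 2 * n + 1) / 2)) +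
        ENNReal.ofReal (((1-ε) * Real.exp ε) ^ (((m:ℝ) + 2 * n + 1) / 2)) := by
      intro n
      refine le_trans (measure_union_le _ _) (add_le_add ?_ ?_)
      · have hset : {ω | (1+ε) * ((m:ℝ) + 2 * n + 1) ≤ (W n ω) ^ 2}
            = (fun ω => (W n ω) ^ 2) ⁻¹' {x | (1+ε) * ((m:ℝ) + 2 * n + 1) ≤ x} := rfl
        have hms : MeasurableSet {x : ℝ | (1+ε) * ((m:ℝ) + 2 * n + 1) ≤ x} := measurableSet_Ici
        rw [hset, ← Measure.map_apply (hXmeas n) hms, hlaw n]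
        exact gamma_conc_upper (hapos n) hε (by ring)
      · have hset : {ω | (W n ω) ^ 2 ≤ (1-ε) * ((m:ℝ) + 2 * n + 1)}
            = (fun ω => (W n ω) ^ 2) ⁻¹' {x | x ≤ (1-ε) * ((m:ℝ) + 2 * n + 1)} := rfl
        have hms : MeasurableSet {x : ℝ | x ≤ (1-ε) * ((m:ℝ) + 2 * n + 1)} := measurableSet_Iic
        rw [hset, ← Measure.map_apply (hXmeas n) hms, hlaw n]
        exact gamma_conc_lower (hapos n) hε hε1 (by ring)
    have hsum : (∑' n, P (S n)) ≠ ⊤ := by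
      refine ne_top_of_le_ne_top ?_ (ENNReal.tsum_le_tsum hbound)
      rw [ENNReal.tsum_add]
      exact ENNReal.add_ne_top.2
        ⟨tsum_ofReal_rpow_ne_top hq1 hq1lt _ hage, tsum_ofReal_rpow_ne_top hq2 hq2lt _ hage⟩
    filter_upwards [ae_eventually_notMem hsum] with ω hω
    filter_upwards [hω] with n hn
    rw [hS] at hn
    simp only [Set.mem_union, Set.mem_setOf_eq, not_or, not_le] at hn
    exact hn
  have hεk : ∀ k : ℕ, (0:ℝ) < 1/((k:ℝ)+2) ∧ (1:ℝ)/((k:ℝ)+2) < 1 := by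
    intro k
    constructor
    · positivity
    · rw [div_lt_one (by positivity)]; linarith [Nat.cast_nonneg (α := ℝ) k]
  have key' : ∀ᵐ ω ∂P, ∀ k : ℕ, ∀ᶠ n in atTop,
      (W n ω) ^ 2 < (1+1/((k:ℝ)+2)) * ((m:ℝ) + 2 * n + 1) ∧
      (1-1/((k:ℝ)+2)) * ((m:ℝ) + 2 * n + 1) < (W n ω) ^ 2 :=
    ae_all_iff.2 fun k => key _ (hεk k).1 (hεk k).2
  filter_upwards [hpos, key'] with ω hωpos hωk
  have hY : Tendsto (fun n : ℕ => (W n ω) ^ 2 / ((m:ℝ) + 2 * n + 1)) atTop (nhds 1) := by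
    rw [Metric.tendsto_atTop]
    intro δ hδ
    obtain ⟨k, hk⟩ := exists_nat_gt (1/δ)
    have hkδ : 1/((k:ℝ)+2) < δ := by
      rw [div_lt_iff₀ (by positivity)]
      have h1 : 1 < (k:ℝ) * δ := by
        have := (div_lt_iff₀ hδ).1 hk
        linarith
      nlinarith
    obtain ⟨N, hN⟩ := eventually_atTop.1 (hωk k)
    refine ⟨N, fun n hn => ?_⟩
    obtain ⟨h1, h2⟩ := hN n hn
    have hr := hrpos n
    have hu : (W n ω) ^ 2 / ((m:ℝ) + 2 * n + 1) < 1 + 1/((k:ℝ)+2) := (div_lt_iff₀ hr).2 h1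
    have hl : 1 - 1/((k:ℝ)+2) < (W n ω) ^ 2 / ((m:ℝ) + 2 * n + 1) := (lt_div_iff₀ hr).2 h2
    rw [Real.dist_eq, abs_sub_lt_iff]
    constructor <;> linarith
  have hsq : Tendsto (fun n : ℕ => Real.sqrt ((W n ω) ^ 2 / ((m:ℝ) + 2 * n + 1)))
      atTop (nhds 1) := by
    have h := (Real.continuous_sqrt.tendsto 1).comp hY
    simpa [Function.comp_def] using h
  refine hsq.congr fun n => ?_
  rw [Real.sqrt_div (sq_nonneg _), Real.sqrt_sq (hωpos n).le]
end
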